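/- arXiv:2501.15750 — 6 statements merged into one kernel-verified Lean document; each statement's English description precedes it below -/
import Mathlib

section
/- Let K be a compact plane set containing the origin and let m ∈ ℕ. If the function z ↦ z^m (restricted to K) lies in the closure of J_0(R(K)), then the function z ↦ z^{2m} (restricted to √K) lies in the closure of J_0(R(√K)). -/
open scoped ENNReal
open Metric Set Filter

noncomputable section

/-- `R₀(K)`: restrictions to `K` of rational functions with poles off `K`. -/
def R0 (K : Set ℂ) : Set C(K, ℂ) :=
  {f | ∃ p q : Polynomial ℂ, (∀ z ∈ K, q.eval z ≠ 0) ∧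
      ∀ z : K, f z = p.eval (z : ℂ) / q.eval (z : ℂ)}

/-- `R(K)`: the uniform closure of `R₀(K)` in `C(K, ℂ)`. -/
def RK (K : Set ℂ) : Set C(K, ℂ) := closure (R0 K)

/-- `M_x`: the ideal of functions in `R(K)` vanishing at `x`. -/
def Mx (K : Set ℂ) (x : ℂ) : Set C(K, ℂ) :=
  {f | f ∈ RK K ∧ ∀ h : x ∈ K, f ⟨x, h⟩ = 0}

/-- `J_x`: the ideal of functions in `R(K)` vanishing on a neighborhood of `x` in `K`. -/
def Jx (K : Set ℂ) (x : ℂ) : Set C(K, ℂ) :=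
  {f | f ∈ RK K ∧ ∃ U : Set ℂ, IsOpen U ∧ x ∈ U ∧ ∀ z : K, (z : ℂ) ∈ U → f z = 0}

/-- The `m`-th ideal power of a set `S` in the ring `C(K, ℂ)`:
finite sums of `m`-fold products of elements of `S`. -/
def idealPow {K : Set ℂ} (S : Set C(K, ℂ)) (m : ℕ) : Set C(K, ℂ) :=
  {f | ∃ (n : ℕ) (g : Fin n → Fin m → C(K, ℂ)),
      (∀ i j, g i j ∈ S) ∧ f = ∑ i, ∏ j, g i j}

/-- `R(K)` is normal. -/
def RKNormal (K : Set ℂ) : Prop :=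
  ∀ K₀ K₁ : Set ℂ, K₀ ⊆ K → K₁ ⊆ K → IsClosed K₀ → IsClosed K₁ → Disjoint K₀ K₁ →
    ∃ f ∈ RK K, (∀ z : K, (z : ℂ) ∈ K₀ → f z = 0) ∧ (∀ z : K, (z : ℂ) ∈ K₁ → f z = 1)

/-- `R(K)` is strongly regular at `x`. -/
def StronglyRegularAt (K : Set ℂ) (x : ℂ) : Prop := closure (Jx K x) = Mx K x

/-- `R(K)` is weakly strongly regular. -/
def WeaklyStronglyRegular (K : Set ℂ) : Prop :=
  ∀ x ∈ K, ∃ m : ℕ, 1 ≤ m ∧ idealPow (Mx K x) m ⊆ closure (Jx K x)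

/-- A Swiss cheese: a compact subset of the closed unit disc with empty interior
such that `R(K) ≠ C(K)`. -/
def IsSwissCheese (K : Set ℂ) : Prop :=
  K.Nonempty ∧ IsCompact K ∧ K ⊆ closedBall (0 : ℂ) 1 ∧ interior K = ∅ ∧ RK K ≠ univ

/-- A point derivation of order `m` on `R(K)` at `a`. -/
def IsPDOrder (K : Set ℂ) (a : ℂ) (m : ℕ) (d : ℕ → C(K, ℂ) → ℂ) : Prop :=
  (∀ f ∈ RK K, ∀ h : a ∈ K, d 0 f = f ⟨a, h⟩) ∧
  (∀ k ≤ m, ∀ f ∈ RK K, ∀ g ∈ RK K, d k (f + g) = d k f + d k g) ∧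
  (∀ k ≤ m, ∀ c : ℂ, ∀ f ∈ RK K, d k (c • f) = c * d k f) ∧
  (∀ k, 1 ≤ k → k ≤ m → ∀ f ∈ RK K, ∀ g ∈ RK K,
      d k (f * g) = ∑ j ∈ Finset.range (k + 1), d j f * d (k - j) g)

/-- A point derivation of infinite order on `R(K)` at `a`. -/
def IsPDInf (K : Set ℂ) (a : ℂ) (d : ℕ → C(K, ℂ) → ℂ) : Prop :=
  (∀ f ∈ RK K, ∀ h : a ∈ K, d 0 f = f ⟨a, h⟩) ∧
  (∀ k, ∀ f ∈ RK K, ∀ g ∈ RK K, d k (f + g) = d k f + d k g) ∧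
  (∀ (k : ℕ) (c : ℂ), ∀ f ∈ RK K, d k (c • f) = c * d k f) ∧
  (∀ k, 1 ≤ k → ∀ f ∈ RK K, ∀ g ∈ RK K,
      d k (f * g) = ∑ j ∈ Finset.range (k + 1), d j f * d (k - j) g)

/-- There is a nondegenerate bounded point derivation of order `m` on `R(K)` at `a`. -/
def HasNBPD (K : Set ℂ) (a : ℂ) (m : ℕ) : Prop :=
  ∃ d : ℕ → C(K, ℂ) → ℂ, IsPDOrder K a m d ∧
    (∀ k ≤ m, Continuous fun f : RK K => d k f.1) ∧
    ∃ f ∈ RK K, d 1 f ≠ 0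

/-- There is a nondegenerate bounded point derivation of infinite order on `R(K)` at `a`. -/
def HasNBPDInf (K : Set ℂ) (a : ℂ) : Prop :=
  ∃ d : ℕ → C(K, ℂ) → ℂ, IsPDInf K a d ∧
    (∀ k, Continuous fun f : RK K => d k f.1) ∧
    ∃ f ∈ RK K, d 1 f ≠ 0

/-- The Browder term `r(D)/s_a(D)^{m+1}` for the disc with center `c` and radius `ρ`;
here `s_a(D) = |dist a c − ρ|` is the distance from `a` to the boundary circle. -/
def browderTerm (a c : ℂ) (ρ : ℝ) (m : ℕ) : ℝ≥0∞ :=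
  ENNReal.ofReal ρ / ENNReal.ofReal (|dist a c - ρ| ^ (m + 1))

/-- The `m`-th order Browder sum at `a` for a family of discs together with the unit disc. -/
def browderSum {ι : Type*} (c : ι → ℂ) (ρ : ι → ℝ) (a : ℂ) (m : ℕ) : ℝ≥0∞ :=
  browderTerm a 0 1 m + ∑' i, browderTerm a (c i) (ρ i) m

/-- Sup norm of `f` over `K`. -/
def supNormOn (K : Set ℂ) (f : ℂ → ℂ) : ℝ := ⨆ z : K, ‖f (z : ℂ)‖

/-- The rational function `p/q`. -/
def ratFun (p q : Polynomial ℂ) : ℂ → ℂ := fun z => p.eval z / q.eval z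

/-- `δ_{a,m}(f) = f⁽ᵐ⁾(a)/m!`. -/
def deltaVal (m : ℕ) (f : ℂ → ℂ) (a : ℂ) : ℂ := iteratedDeriv m f a / (m.factorial : ℂ)

/-- `δ_{a,m}` is continuous (bounded) on `R₀(K)` with respect to the sup norm. -/
def DeltaCont (K : Set ℂ) (a : ℂ) (m : ℕ) : Prop :=
  ∃ C : ℝ, ∀ p q : Polynomial ℂ, (∀ z ∈ K, q.eval z ≠ 0) →
    ‖deltaVal m (ratFun p q) a‖ ≤ C * supNormOn K (ratFun p q)

/-- The square root of a plane set: `{z : z² ∈ E}`. -/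
def sqrtSet (E : Set ℂ) : Set ℂ := {z | z ^ 2 ∈ E}

/-- The restriction of `z ↦ zᵐ` to `K`. -/
def zpowMap (K : Set ℂ) (m : ℕ) : C(K, ℂ) :=
  ⟨fun z => (z : ℂ) ^ m, continuous_subtype_val.pow m⟩

/-- The restriction of `z ↦ (z−a)ⁿ` to `K`. -/
def zamMap (K : Set ℂ) (a : ℂ) (n : ℕ) : C(K, ℂ) :=
  ⟨fun z => ((z : ℂ) - a) ^ n, (continuous_subtype_val.sub continuous_const).pow n⟩


/-- The squaring map from `√K` to `K`. -/
def sqCM (K : Set ℂ) : C(sqrtSet K, K) :=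
  ⟨fun z => ⟨(z : ℂ) ^ 2, z.2⟩, Continuous.subtype_mk (continuous_subtype_val.pow 2) _⟩

/-- Theorem 1.7(a): if `z^m ∈ cl J_0(R(K))`, then `z^{2m} ∈ cl J_0(R(√K))`. -/
theorem sqrt_of_set_J (K : Set ℂ) (hK : IsCompact K) (h0 : (0 : ℂ) ∈ K)
    (m : ℕ) (hm : 1 ≤ m) (h : zpowMap K m ∈ closure (Jx K 0)) :
    zpowMap (sqrtSet K) (2 * m) ∈ closure (Jx (sqrtSet K) 0) := by
  have hR0 : MapsTo (fun f : C(K, ℂ) => f.comp (sqCM K)) (R0 K) (R0 (sqrtSet K)) := by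
    rintro f ⟨p, q, hq, hf⟩
    exact ⟨p.comp (Polynomial.X ^ 2), q.comp (Polynomial.X ^ 2),
      fun z hz => by simpa using hq _ hz,
      fun z => by simpa [sqCM] using hf ((sqCM K) z)⟩
  have hRK : MapsTo (fun f : C(K, ℂ) => f.comp (sqCM K)) (RK K) (RK (sqrtSet K)) :=
    fun f hf => map_mem_closure (f := fun g : C(K,ℂ) => g.comp (sqCM K))
      (ContinuousMap.continuous_precomp _) hf hR0
  have hJ : MapsTo (fun f : C(K, ℂ) => f.comp (sqCM K)) (Jx K 0) (Jx (sqrtSet K) 0) := by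
    rintro f ⟨hfR, U, hU, h0U, hvan⟩
    refine ⟨hRK hfR, (fun z : ℂ => z ^ 2) ⁻¹' U, hU.preimage (continuous_pow 2),
      by simpa using h0U, fun z hz => hvan _ hz⟩
  have key := map_mem_closure (f := fun g : C(K,ℂ) => g.comp (sqCM K))
      (ContinuousMap.continuous_precomp (sqCM K)) h hJ
  have heq : (zpowMap K m).comp (sqCM K) = zpowMap (sqrtSet K) (2 * m) := by
    ext z
    simp [zpowMap, sqCM, ← pow_mul, mul_comm]
  simpa only [heq] using key

end
end

section
/- Let K be a compact plane set containing the origin and let m ∈ ℕ. If the closure of J_0(R(K)) contains the ideal power M_0(R(K))^m, then the closure of J_0(R(√K)) contains M_0(R(√K))^{2m}. -/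
open scoped ENNReal
open Metric Set Filter

noncomputable section

namespace SqrtAux
open Polynomial Topology

variable {K : Set ℂ}

/-- `R0 K` as a subalgebra. -/
def R0alg (K : Set ℂ) : Subalgebra ℂ C(K, ℂ) where
  carrier := R0 K
  add_mem' := by
    rintro f g ⟨p1, q1, hq1, hf⟩ ⟨p2, q2, hq2, hg⟩
    refine ⟨p1 * q2 + p2 * q1, q1 * q2,
      fun z hz => by rw [eval_mul]; exact mul_ne_zero (hq1 z hz) (hq2 z hz), fun z => ?_⟩
    have h1 := hq1 z z.2; have h2 := hq2 z z.2
    simp only [ContinuousMap.add_apply, hf z, hg z, eval_add, eval_mul]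
    rw [div_add_div _ _ h1 h2]; ring
  mul_mem' := by
    rintro f g ⟨p1, q1, hq1, hf⟩ ⟨p2, q2, hq2, hg⟩
    refine ⟨p1 * p2, q1 * q2,
      fun z hz => by rw [eval_mul]; exact mul_ne_zero (hq1 z hz) (hq2 z hz), fun z => ?_⟩
    simp only [ContinuousMap.mul_apply, hf z, hg z, eval_mul]
    rw [div_mul_div_comm]
  algebraMap_mem' := fun c =>
    ⟨C c, 1, by simp, fun z => by simp⟩

lemma mem_RK_iff [CompactSpace K] {f : C(K, ℂ)} : f ∈ RK K ↔ f ∈ (R0alg K).topologicalClosure := by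
  have : ((R0alg K).topologicalClosure : Set C(K, ℂ)) = closure (R0 K) :=
    Subalgebra.topologicalClosure_coe _
  constructor
  · intro hf; exact (Set.ext_iff.mp this f).mpr hf
  · intro hf; exact (Set.ext_iff.mp this f).mp hf

lemma R0_subset_RK : R0 K ⊆ RK K := subset_closure

lemma RK_add [CompactSpace K] {f g : C(K, ℂ)} (hf : f ∈ RK K) (hg : g ∈ RK K) : f + g ∈ RK K :=
  mem_RK_iff.mpr (add_mem (mem_RK_iff.mp hf) (mem_RK_iff.mp hg))

lemma RK_mul [CompactSpace K] {f g : C(K, ℂ)} (hf : f ∈ RK K) (hg : g ∈ RK K) : f * g ∈ RK K :=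
  mem_RK_iff.mpr (mul_mem (mem_RK_iff.mp hf) (mem_RK_iff.mp hg))

lemma RK_smul [CompactSpace K] (c : ℂ) {f : C(K, ℂ)} (hf : f ∈ RK K) : c • f ∈ RK K :=
  mem_RK_iff.mpr (Subalgebra.smul_mem _ (mem_RK_iff.mp hf) c)

lemma RK_zero [CompactSpace K] : (0 : C(K, ℂ)) ∈ RK K :=
  mem_RK_iff.mpr (zero_mem _)

lemma RK_one [CompactSpace K] : (1 : C(K, ℂ)) ∈ RK K :=
  mem_RK_iff.mpr (one_mem _)

lemma RK_sub [CompactSpace K] {f g : C(K, ℂ)} (hf : f ∈ RK K) (hg : g ∈ RK K) : f - g ∈ RK K := by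
  have := mem_RK_iff.mpr (Subalgebra.sub_mem ((R0alg K).topologicalClosure)
    (mem_RK_iff.mp hf) (mem_RK_iff.mp hg))
  exact this

/-- membership in the sqrt set -/
lemma mem_sqrtSet_iff {z : ℂ} : z ∈ sqrtSet K ↔ z ^ 2 ∈ K := Iff.rfl

lemma zero_mem_sqrtSet (h0 : (0 : ℂ) ∈ K) : (0 : ℂ) ∈ sqrtSet K := by
  simp [mem_sqrtSet_iff, h0]

lemma neg_mem_sqrtSet {z : ℂ} (hz : z ∈ sqrtSet K) : -z ∈ sqrtSet K := by
  simpa [mem_sqrtSet_iff, neg_sq] using hz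

/-- the squaring map -/
def sqMap (K : Set ℂ) : C(sqrtSet K, K) :=
  ⟨fun z => ⟨(z : ℂ) ^ 2, z.2⟩, ((continuous_subtype_val.pow 2)).subtype_mk _⟩

/-- the negation map -/
def negMap (K : Set ℂ) : C(sqrtSet K, sqrtSet K) :=
  ⟨fun z => ⟨-(z : ℂ), neg_mem_sqrtSet z.2⟩, (continuous_subtype_val.neg).subtype_mk _⟩

lemma sqMap_surj : Function.Surjective (sqMap K) := by
  rintro ⟨w, hw⟩
  obtain ⟨z, hz⟩ := IsAlgClosed.exists_pow_nat_eq (k := ℂ) w (n := 2) two_pos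
  exact ⟨⟨z, by simpa [mem_sqrtSet_iff, hz] using hw⟩, Subtype.ext hz⟩

lemma negMap_negMap (z : sqrtSet K) : negMap K (negMap K z) = z := Subtype.ext (by simp [negMap])

lemma sqMap_negMap (z : sqrtSet K) : sqMap K (negMap K z) = sqMap K z := Subtype.ext (by simp [negMap, sqMap])

lemma comp_sqMap_mem_R0 {g : C(K, ℂ)} (hg : g ∈ R0 K) :
    g.comp (sqMap K) ∈ R0 (sqrtSet K) := by
  obtain ⟨p, q, hq, hrep⟩ := hg
  refine ⟨p.comp (X ^ 2), q.comp (X ^ 2), fun z hz => ?_, fun z => ?_⟩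
  · rw [eval_comp]; simpa using hq (z ^ 2) hz
  · have := hrep (sqMap K z)
    simp only [ContinuousMap.comp_apply, eval_comp]
    simpa [sqMap] using this

lemma comp_negMap_mem_R0 {g : C(sqrtSet K, ℂ)} (hg : g ∈ R0 (sqrtSet K)) :
    g.comp (negMap K) ∈ R0 (sqrtSet K) := by
  obtain ⟨p, q, hq, hrep⟩ := hg
  refine ⟨p.comp (-X), q.comp (-X), fun z hz => ?_, fun z => ?_⟩
  · rw [eval_comp]; simpa using hq (-z) (neg_mem_sqrtSet hz)
  · have := hrep (negMap K z)
    simp only [ContinuousMap.comp_apply, eval_comp]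
    simpa [negMap] using this

lemma comp_sqMap_mem_RK {g : C(K, ℂ)} (hg : g ∈ RK K) :
    g.comp (sqMap K) ∈ RK (sqrtSet K) :=
  map_mem_closure (f := fun g : C(K, ℂ) => g.comp (sqMap K))
    (ContinuousMap.continuous_precomp (sqMap K)) hg
    (fun _ hx => comp_sqMap_mem_R0 hx)

lemma comp_negMap_mem_RK {g : C(sqrtSet K, ℂ)} (hg : g ∈ RK (sqrtSet K)) :
    g.comp (negMap K) ∈ RK (sqrtSet K) :=
  map_mem_closure (f := fun g : C(sqrtSet K, ℂ) => g.comp (negMap K))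
    (ContinuousMap.continuous_precomp (negMap K)) hg
    (fun _ hx => comp_negMap_mem_R0 hx)

end SqrtAux
namespace SqrtAux
open Polynomial Topology

variable {K : Set ℂ}

lemma poly_split (s : ℂ[X]) :
    ∃ a b : ℂ[X], ∀ z : ℂ, s.eval z = a.eval (z ^ 2) + z * b.eval (z ^ 2) := by
  induction s using Polynomial.induction_on' with
  | add p q hp hq =>
    obtain ⟨a, b, hab⟩ := hp; obtain ⟨c, d, hcd⟩ := hq
    exact ⟨a + c, b + d, fun z => by simp [hab z, hcd z]; ring⟩
  | monomial n c =>
    rcases Nat.even_or_odd n with ⟨k, hk⟩ | ⟨k, hk⟩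
    · refine ⟨Polynomial.monomial k c, 0, fun z => ?_⟩
      simp [Polynomial.eval_monomial, hk, ← pow_mul, two_mul]
    · refine ⟨0, Polynomial.monomial k c, fun z => ?_⟩
      simp [Polynomial.eval_monomial, hk, ← pow_mul, two_mul]
      ring

lemma even_poly (s : ℂ[X]) (hs : ∀ z : ℂ, s.eval (-z) = s.eval z) :
    ∃ a : ℂ[X], ∀ z : ℂ, s.eval z = a.eval (z ^ 2) := by
  obtain ⟨a, b, hab⟩ := poly_split s
  refine ⟨a, fun z => ?_⟩
  by_cases hz : z = 0
  · subst hz; simpa using hab 0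
  · have h1 := hab z
    have h2 := hab (-z)
    rw [hs z, neg_sq] at h2
    have hzb : z * b.eval (z ^ 2) = 0 := by
      have h3 : (2 : ℂ) * (z * b.eval (z ^ 2)) = 0 := by linear_combination h2 - h1
      exact (mul_eq_zero.mp h3).resolve_left two_ne_zero
    have hb : b.eval (z ^ 2) = 0 := (mul_eq_zero.mp hzb).resolve_left hz
    rw [h1, hb]; ring

lemma sqrtSet_compact (hK : IsCompact K) : IsCompact (sqrtSet K) := by
  obtain ⟨C, hC⟩ := hK.isBounded.subset_closedBall 0
  have hclosed : IsClosed (sqrtSet K) :=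
    IsClosed.preimage (continuous_pow 2) hK.isClosed
  refine Metric.isCompact_of_isClosed_isBounded hclosed ?_
  refine (Metric.isBounded_iff_subset_closedBall 0).mpr ⟨Real.sqrt C + 1, fun z hz => ?_⟩
  have h1 : ‖(z : ℂ)‖ ^ 2 = ‖z ^ 2‖ := (norm_pow _ _).symm
  have h2 : ‖z ^ 2‖ ≤ C := by
    have := hC hz
    simpa [Metric.mem_closedBall, dist_eq_norm] using this
  have h3 : ‖z‖ ^ 2 ≤ C := by rw [h1]; exact h2
  have h4 : ‖z‖ ≤ Real.sqrt C := by
    rw [← Real.sqrt_sq (norm_nonneg z)]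
    exact Real.sqrt_le_sqrt h3
  have : ‖z‖ ≤ Real.sqrt C + 1 := by linarith
  simpa [Metric.mem_closedBall, dist_eq_norm] using this

lemma comp_sqMap_isometry [CompactSpace K] [CompactSpace (sqrtSet K)] :
    Isometry (fun g : C(K, ℂ) => g.comp (sqMap K)) := by
  refine Isometry.of_dist_eq fun g g' => ?_
  refine le_antisymm ?_ ?_
  · refine (ContinuousMap.dist_le dist_nonneg).mpr fun z => ?_
    exact ContinuousMap.dist_apply_le_dist (sqMap K z)
  · refine (ContinuousMap.dist_le dist_nonneg).mpr fun w => ?_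
    obtain ⟨z, hz⟩ := sqMap_surj w
    rw [← hz]
    exact ContinuousMap.dist_apply_le_dist (f := g.comp (sqMap K)) (g := g'.comp (sqMap K)) z

/-- even functions in `RK (sqrtSet K)` come from `RK K` -/
lemma even_extract (hK : IsCompact K) {f : C(sqrtSet K, ℂ)}
    (hf : f ∈ RK (sqrtSet K)) (heven : f.comp (negMap K) = f) :
    ∃ G ∈ RK K, f = G.comp (sqMap K) := by
  haveI : CompactSpace K := isCompact_iff_compactSpace.mp hK
  haveI : CompactSpace (sqrtSet K) := isCompact_iff_compactSpace.mp (sqrtSet_compact hK)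
  set Φ : C(K, ℂ) → C(sqrtSet K, ℂ) := fun g => g.comp (sqMap K) with hΦ
  have hiso : Isometry Φ := comp_sqMap_isometry
  -- the image of RK K is closed
  have hclosedim : IsClosed (Φ '' RK K) :=
    (hiso.isClosedEmbedding.isClosedMap) _ isClosed_closure
  have hsub : Φ '' R0 K ⊆ Φ '' RK K := Set.image_mono R0_subset_RK
  -- f is in the closure of Φ '' R0 K
  have hmem : f ∈ closure (Φ '' R0 K) := by
    rw [Metric.mem_closure_iff]
    intro ε hε
    obtain ⟨r, hr, hdist⟩ := Metric.mem_closure_iff.mp hf ε hε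
    obtain ⟨p, q, hq, hrep⟩ := hr
    -- the even part of r
    set er : C(sqrtSet K, ℂ) := (2⁻¹ : ℂ) • (r + r.comp (negMap K)) with her
    refine ⟨er, ?_, ?_⟩
    · -- er ∈ Φ '' R0 K
      set N : ℂ[X] := p * q.comp (-X) + p.comp (-X) * q with hN
      set D : ℂ[X] := Polynomial.C 2 * (q * q.comp (-X)) with hD
      have hNe : ∀ z : ℂ, N.eval (-z) = N.eval z := by
        intro z; simp [hN, eval_comp]; ring
      have hDe : ∀ z : ℂ, D.eval (-z) = D.eval z := by
        intro z; simp [hD, eval_comp]; ring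
      obtain ⟨A, hA⟩ := even_poly N hNe
      obtain ⟨B, hB⟩ := even_poly D hDe
      have hBne : ∀ w ∈ K, B.eval w ≠ 0 := by
        intro w hw
        obtain ⟨z, hz⟩ := sqMap_surj ⟨w, hw⟩
        have hzval : (z : ℂ) ^ 2 = w := congrArg Subtype.val hz
        rw [← hzval, ← hB]
        simp only [hD, eval_mul, eval_C, eval_comp, eval_neg, eval_X]
        exact mul_ne_zero two_ne_zero
          (mul_ne_zero (hq _ z.2) (hq _ (neg_mem_sqrtSet z.2)))
      have hGmem : (⟨fun w => A.eval (w : ℂ) / B.eval (w : ℂ),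
          ((Polynomial.continuous A).comp continuous_subtype_val).div
            ((Polynomial.continuous B).comp continuous_subtype_val)
            (fun w => hBne w w.2)⟩ : C(K, ℂ)) ∈ R0 K := ⟨A, B, hBne, fun w => rfl⟩
      refine ⟨_, hGmem, ?_⟩
      ext z
      have hq1 : q.eval (z : ℂ) ≠ 0 := hq _ z.2
      have hq2 : q.eval (-(z : ℂ)) ≠ 0 := hq _ (neg_mem_sqrtSet z.2)
      have h1 := hrep z
      have h2 : r ((negMap K) z) = p.eval (-(z : ℂ)) / q.eval (-(z : ℂ)) := hrep (negMap K z)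
      have herz : er z = 2⁻¹ * (r z + r ((negMap K) z)) := rfl
      show A.eval ((z : ℂ) ^ 2) / B.eval ((z : ℂ) ^ 2) = er z
      rw [← hA, ← hB, herz, h1, h2]
      simp only [hN, hD, eval_mul, eval_add, eval_C, eval_comp, eval_neg, eval_X]
      field_simp
      try ring
    · -- dist f er < ε
      have hfe : f = (2⁻¹ : ℂ) • (f + f.comp (negMap K)) := by
        rw [heven]; ext z; simp; ring
      have hcontr : dist (f.comp (negMap K)) (r.comp (negMap K)) ≤ dist f r := by
        refine (ContinuousMap.dist_le dist_nonneg).mpr fun z => ?_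
        exact ContinuousMap.dist_apply_le_dist (negMap K z)
      calc dist f er = dist ((2⁻¹ : ℂ) • (f + f.comp (negMap K)))
            ((2⁻¹ : ℂ) • (r + r.comp (negMap K))) := by rw [← hfe, her]
        _ = ‖(2⁻¹ : ℂ)‖ * dist (f + f.comp (negMap K)) (r + r.comp (negMap K)) :=
            dist_smul₀ _ _ _
        _ ≤ ‖(2⁻¹ : ℂ)‖ * (dist f r + dist (f.comp (negMap K)) (r.comp (negMap K))) := by
            gcongr; exact dist_add_add_le _ _ _ _
        _ ≤ ‖(2⁻¹ : ℂ)‖ * (dist f r + dist f r) := by gcongr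
        _ = dist f r := by rw [norm_inv]; norm_num; ring
        _ < ε := hdist
  have : f ∈ Φ '' RK K := by
    have := closure_minimal hsub hclosedim hmem
    exact this
  obtain ⟨G, hG, hGf⟩ := this
  exact ⟨G, hG, hGf.symm⟩

end SqrtAux
namespace SqrtAux
open Polynomial Topology

variable {K : Set ℂ}

lemma Jx_zero [CompactSpace K] : (0 : C(K, ℂ)) ∈ Jx K 0 :=
  ⟨RK_zero, Set.univ, isOpen_univ, trivial, fun _ _ => rfl⟩

lemma Jx_add [CompactSpace K] {f g : C(K, ℂ)} (hf : f ∈ Jx K 0) (hg : g ∈ Jx K 0) :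
    f + g ∈ Jx K 0 := by
  obtain ⟨hfR, U, hU, h0U, hUv⟩ := hf
  obtain ⟨hgR, V, hV, h0V, hVv⟩ := hg
  exact ⟨RK_add hfR hgR, U ∩ V, hU.inter hV, ⟨h0U, h0V⟩,
    fun z hz => by simp [hUv z hz.1, hVv z hz.2]⟩

def Jclos (K : Set ℂ) [CompactSpace K] : AddSubmonoid C(K, ℂ) where
  carrier := closure (Jx K 0)
  zero_mem' := subset_closure Jx_zero
  add_mem' := by
    intro a b ha hb
    have hmem : (a, b) ∈ closure ((Jx K 0) ×ˢ (Jx K 0)) := by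
      rw [closure_prod_eq]; exact ⟨ha, hb⟩
    exact map_mem_closure (f := fun p : C(K, ℂ) × C(K, ℂ) => p.1 + p.2)
      (continuous_fst.add continuous_snd) hmem (fun p hp => Jx_add hp.1 hp.2)

lemma Jx_mul_left [CompactSpace K] {u g : C(K, ℂ)} (hu : u ∈ RK K) (hg : g ∈ Jx K 0) :
    u * g ∈ Jx K 0 := by
  obtain ⟨hgR, U, hU, h0U, hUv⟩ := hg
  exact ⟨RK_mul hu hgR, U, hU, h0U, fun z hz => by simp [hUv z hz]⟩

lemma closureJx_mul_left [CompactSpace K] {u g : C(K, ℂ)} (hu : u ∈ RK K)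
    (hg : g ∈ closure (Jx K 0)) : u * g ∈ closure (Jx K 0) :=
  map_mem_closure (f := fun g : C(K, ℂ) => u * g) (continuous_mul_left u) hg
    (fun _ hx => Jx_mul_left hu hx)

lemma comp_sqMap_closureJx (hK : IsCompact K) (h0 : (0 : ℂ) ∈ K) {g : C(K, ℂ)}
    (hg : g ∈ closure (Jx K 0)) :
    g.comp (sqMap K) ∈ closure (Jx (sqrtSet K) 0) := by
  refine map_mem_closure (f := fun g : C(K, ℂ) => g.comp (sqMap K))
    (ContinuousMap.continuous_precomp (sqMap K)) hg (fun x hx => ?_)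
  obtain ⟨hxR, U, hU, h0U, hUv⟩ := hx
  refine ⟨comp_sqMap_mem_RK hxR, (fun w : ℂ => w ^ 2) ⁻¹' U,
    hU.preimage (continuous_pow 2), by simpa using h0U, fun z hz => ?_⟩
  exact hUv (sqMap K z) hz

/-- the basic building blocks: `(H₁⋯H_m)∘sq · u` -/
def baseSet (K : Set ℂ) (m : ℕ) : Set C(sqrtSet K, ℂ) :=
  {f | ∃ (l : List C(K, ℂ)) (u : C(sqrtSet K, ℂ)), l.length = m ∧ (∀ x ∈ l, x ∈ Mx K 0) ∧
    u ∈ RK (sqrtSet K) ∧ f = (l.prod.comp (sqMap K)) * u}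

lemma baseSet_mul [CompactSpace (sqrtSet K)] {r s : ℕ} {f g : C(sqrtSet K, ℂ)}
    (hf : f ∈ baseSet K r) (hg : g ∈ baseSet K s) : f * g ∈ baseSet K (r + s) := by
  obtain ⟨l, u, hl, hlM, hu, rfl⟩ := hf
  obtain ⟨l', u', hl', hlM', hu', rfl⟩ := hg
  refine ⟨l ++ l', u * u', by simp [hl, hl'], fun x hx => ?_, RK_mul hu hu', ?_⟩
  · rcases List.mem_append.mp hx with hh | hh
    exacts [hlM x hh, hlM' x hh]
  · rw [List.prod_append, ContinuousMap.mul_comp]; ring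

lemma Wmul [CompactSpace (sqrtSet K)] {r s : ℕ} {f g : C(sqrtSet K, ℂ)}
    (hf : f ∈ AddSubmonoid.closure (baseSet K r))
    (hg : g ∈ AddSubmonoid.closure (baseSet K s)) :
    f * g ∈ AddSubmonoid.closure (baseSet K (r + s)) := by
  refine AddSubmonoid.closure_induction
    (motive := fun x _ => x * g ∈ AddSubmonoid.closure (baseSet K (r + s))) ?_ ?_ ?_ hf
  · intro x hx
    refine AddSubmonoid.closure_induction
      (motive := fun y _ => x * y ∈ AddSubmonoid.closure (baseSet K (r + s))) ?_ ?_ ?_ hg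
    · intro y hy; exact AddSubmonoid.subset_closure (baseSet_mul hx hy)
    · show x * 0 ∈ AddSubmonoid.closure (baseSet K (r + s))
      rw [mul_zero]; exact zero_mem _
    · intro y z _ _ hy hz
      show x * (y + z) ∈ AddSubmonoid.closure (baseSet K (r + s))
      rw [mul_add]; exact add_mem hy hz
  · show (0 : C(sqrtSet K, ℂ)) * g ∈ AddSubmonoid.closure (baseSet K (r + s))
    rw [zero_mul]; exact zero_mem _
  · intro x y _ _ hx hy
    show (x + y) * g ∈ AddSubmonoid.closure (baseSet K (r + s))
    rw [add_mul]; exact add_mem hx hy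

lemma pair_mem (hK : IsCompact K) (h0 : (0 : ℂ) ∈ K) {f g : C(sqrtSet K, ℂ)}
    (hf : f ∈ Mx (sqrtSet K) 0) (hg : g ∈ Mx (sqrtSet K) 0) :
    f * g ∈ AddSubmonoid.closure (baseSet K 1) := by
  haveI : CompactSpace K := isCompact_iff_compactSpace.mp hK
  haveI : CompactSpace (sqrtSet K) := isCompact_iff_compactSpace.mp (sqrtSet_compact hK)
  have h0L : (0 : ℂ) ∈ sqrtSet K := zero_mem_sqrtSet h0
  obtain ⟨hfR, hf0⟩ := hf
  obtain ⟨hgR, hg0⟩ := hg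
  have hf0' : f ⟨0, h0L⟩ = 0 := hf0 h0L
  have hg0' : g ⟨0, h0L⟩ = 0 := hg0 h0L
  have hν0 : negMap K ⟨0, h0L⟩ = ⟨0, h0L⟩ := Subtype.ext (by simp [negMap])
  have h00 : sqMap K ⟨0, h0L⟩ = (⟨0, h0⟩ : K) := Subtype.ext (by simp [sqMap])
  -- even parts
  set ef : C(sqrtSet K, ℂ) := (2⁻¹ : ℂ) • (f + f.comp (negMap K)) with hef
  set eg : C(sqrtSet K, ℂ) := (2⁻¹ : ℂ) • (g + g.comp (negMap K)) with heg
  have hefR : ef ∈ RK (sqrtSet K) := RK_smul _ (RK_add hfR (comp_negMap_mem_RK hfR))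
  have hegR : eg ∈ RK (sqrtSet K) := RK_smul _ (RK_add hgR (comp_negMap_mem_RK hgR))
  have hefeven : ef.comp (negMap K) = ef := by
    ext z
    simp only [hef, ContinuousMap.comp_apply, ContinuousMap.smul_apply,
      ContinuousMap.add_apply, negMap_negMap, smul_eq_mul]
    ring
  have hegeven : eg.comp (negMap K) = eg := by
    ext z
    simp only [heg, ContinuousMap.comp_apply, ContinuousMap.smul_apply,
      ContinuousMap.add_apply, negMap_negMap, smul_eq_mul]
    ring
  have hef0 : ef ⟨0, h0L⟩ = 0 := by
    simp [hef, hν0, hf0']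
  have heg0 : eg ⟨0, h0L⟩ = 0 := by
    simp [heg, hν0, hg0']
  obtain ⟨Ef, hEfR, hEfeq⟩ := even_extract hK hefR hefeven
  obtain ⟨Eg, hEgR, hEgeq⟩ := even_extract hK hegR hegeven
  have hEf0 : ∀ hh : (0 : ℂ) ∈ K, Ef ⟨0, hh⟩ = 0 := by
    intro hh
    have h1 : ef ⟨0, h0L⟩ = Ef (sqMap K ⟨0, h0L⟩) := by rw [hEfeq]; rfl
    rw [show (⟨0, hh⟩ : K) = sqMap K ⟨0, h0L⟩ from Subtype.ext (by simp [sqMap]), ← h1, hef0]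
  have hEg0 : ∀ hh : (0 : ℂ) ∈ K, Eg ⟨0, hh⟩ = 0 := by
    intro hh
    have h1 : eg ⟨0, h0L⟩ = Eg (sqMap K ⟨0, h0L⟩) := by rw [hEgeq]; rfl
    rw [show (⟨0, hh⟩ : K) = sqMap K ⟨0, h0L⟩ from Subtype.ext (by simp [sqMap]), ← h1, heg0]
  -- odd parts
  have hoFR : f - ef ∈ RK (sqrtSet K) := RK_sub hfR hefR
  have hoGR : g - eg ∈ RK (sqrtSet K) := RK_sub hgR hegR
  have hoFodd : (f - ef).comp (negMap K) = -(f - ef) := by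
    ext z
    simp only [hef, ContinuousMap.comp_apply, ContinuousMap.sub_apply,
      ContinuousMap.smul_apply, ContinuousMap.add_apply, ContinuousMap.neg_apply,
      negMap_negMap, smul_eq_mul]
    ring
  have hoGodd : (g - eg).comp (negMap K) = -(g - eg) := by
    ext z
    simp only [heg, ContinuousMap.comp_apply, ContinuousMap.sub_apply,
      ContinuousMap.smul_apply, ContinuousMap.add_apply, ContinuousMap.neg_apply,
      negMap_negMap, smul_eq_mul]
    ring
  -- product of the two odd parts is even
  have hPR : (f - ef) * (g - eg) ∈ RK (sqrtSet K) := RK_mul hoFR hoGR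
  have hPeven : ((f - ef) * (g - eg)).comp (negMap K) = (f - ef) * (g - eg) := by
    rw [ContinuousMap.mul_comp, hoFodd, hoGodd, neg_mul_neg]
  obtain ⟨F, hFR, hFeq⟩ := even_extract hK hPR hPeven
  have hF0 : ∀ hh : (0 : ℂ) ∈ K, F ⟨0, hh⟩ = 0 := by
    intro hh
    have h1 : ((f - ef) * (g - eg)) ⟨0, h0L⟩ = F (sqMap K ⟨0, h0L⟩) := by rw [hFeq]; rfl
    rw [show (⟨0, hh⟩ : K) = sqMap K ⟨0, h0L⟩ from Subtype.ext (by simp [sqMap]), ← h1]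
    simp [hf0', hef0]
  -- the four terms
  have t1 : ef * eg ∈ baseSet K 1 := by
    refine ⟨[Ef], eg, rfl, ?_, hegR, ?_⟩
    · intro x hx
      rw [List.mem_singleton.mp hx]
      exact ⟨hEfR, hEf0⟩
    · rw [show ([Ef] : List C(K, ℂ)).prod = Ef by simp, ← hEfeq]
  have t2 : ef * (g - eg) ∈ baseSet K 1 := by
    refine ⟨[Ef], g - eg, rfl, ?_, hoGR, ?_⟩
    · intro x hx
      rw [List.mem_singleton.mp hx]
      exact ⟨hEfR, hEf0⟩
    · rw [show ([Ef] : List C(K, ℂ)).prod = Ef by simp, ← hEfeq]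
  have t3 : (f - ef) * eg ∈ baseSet K 1 := by
    refine ⟨[Eg], f - ef, rfl, ?_, hoFR, ?_⟩
    · intro x hx
      rw [List.mem_singleton.mp hx]
      exact ⟨hEgR, hEg0⟩
    · rw [show ([Eg] : List C(K, ℂ)).prod = Eg by simp, ← hEgeq]; ring
  have t4 : (f - ef) * (g - eg) ∈ baseSet K 1 := by
    refine ⟨[F], 1, rfl, ?_, RK_one, ?_⟩
    · intro x hx
      rw [List.mem_singleton.mp hx]
      exact ⟨hFR, hF0⟩
    · rw [show ([F] : List C(K, ℂ)).prod = F by simp, ← hFeq, mul_one]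
  have hsplit : f * g =
      ef * eg + (ef * (g - eg) + ((f - ef) * eg + (f - ef) * (g - eg))) := by ring
  rw [hsplit]
  exact add_mem (AddSubmonoid.subset_closure t1)
    (add_mem (AddSubmonoid.subset_closure t2)
      (add_mem (AddSubmonoid.subset_closure t3) (AddSubmonoid.subset_closure t4)))

lemma baseSet_sub_closureJx (hK : IsCompact K) (h0 : (0 : ℂ) ∈ K) {m : ℕ}
    (h : idealPow (Mx K 0) m ⊆ closure (Jx K 0)) :
    baseSet K m ⊆ closure (Jx (sqrtSet K) 0) := by
  haveI : CompactSpace K := isCompact_iff_compactSpace.mp hK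
  haveI : CompactSpace (sqrtSet K) := isCompact_iff_compactSpace.mp (sqrtSet_compact hK)
  rintro f ⟨l, u, hl, hlM, hu, rfl⟩
  have hprod : l.prod ∈ idealPow (Mx K 0) m := by
    subst hl
    refine ⟨1, fun _ => fun j => l.get j, fun i j => hlM _ (List.get_mem l j), ?_⟩
    rw [Fin.sum_univ_one]
    conv_lhs => rw [← List.ofFn_get l]
    rw [List.prod_ofFn]
  have hc : l.prod.comp (sqMap K) ∈ closure (Jx (sqrtSet K) 0) :=
    comp_sqMap_closureJx hK h0 (h hprod)
  rw [mul_comm]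
  exact closureJx_mul_left hu hc

lemma Wclos_sub (hK : IsCompact K) (h0 : (0 : ℂ) ∈ K) {m : ℕ}
    (h : idealPow (Mx K 0) m ⊆ closure (Jx K 0)) {f : C(sqrtSet K, ℂ)}
    (hf : f ∈ AddSubmonoid.closure (baseSet K m)) :
    f ∈ closure (Jx (sqrtSet K) 0) := by
  haveI : CompactSpace K := isCompact_iff_compactSpace.mp hK
  haveI : CompactSpace (sqrtSet K) := isCompact_iff_compactSpace.mp (sqrtSet_compact hK)
  refine AddSubmonoid.closure_induction
    (motive := fun y _ => y ∈ closure (Jx (sqrtSet K) 0)) ?_ ?_ ?_ hf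
  · intro y hy; exact baseSet_sub_closureJx hK h0 h hy
  · exact subset_closure Jx_zero
  · intro a b _ _ ha hb; exact (Jclos (sqrtSet K)).add_mem ha hb

lemma list_prod_mem (hK : IsCompact K) (h0 : (0 : ℂ) ∈ K) :
    ∀ (k : ℕ) (l : List C(sqrtSet K, ℂ)), (∀ x ∈ l, x ∈ Mx (sqrtSet K) 0) →
      l.length = 2 * (k + 1) → l.prod ∈ AddSubmonoid.closure (baseSet K (k + 1)) := by
  haveI : CompactSpace K := isCompact_iff_compactSpace.mp hK
  haveI : CompactSpace (sqrtSet K) := isCompact_iff_compactSpace.mp (sqrtSet_compact hK)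
  intro k
  induction k with
  | zero =>
    intro l hl hlen
    rcases l with _ | ⟨a, l⟩; · simp at hlen
    rcases l with _ | ⟨b, l⟩; · simp at hlen
    rcases l with _ | ⟨c, l⟩
    · simp only [List.prod_cons, List.prod_nil, mul_one]
      exact pair_mem hK h0 (hl a (by simp)) (hl b (by simp))
    · simp only [List.length_cons] at hlen; omega
  | succ k ih =>
    intro l hl hlen
    rcases l with _ | ⟨a, l⟩
    · simp only [List.length_nil] at hlen; omega
    rcases l with _ | ⟨b, t⟩
    · simp only [List.length_cons, List.length_nil] at hlen; omega
    have hlt : t.length = 2 * (k + 1) := by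
      simp only [List.length_cons] at hlen; omega
    have h1 := pair_mem hK h0 (hl a (by simp)) (hl b (by simp))
    have h2 := ih t (fun x hx => hl x (by simp [hx])) hlt
    have h3 := Wmul h1 h2
    rw [show 1 + (k + 1) = k + 1 + 1 by omega] at h3
    rw [List.prod_cons, List.prod_cons, ← mul_assoc]
    exact h3

end SqrtAux
/-- Theorem 1.7(b): if `cl J_0(R(K)) ⊇ M_0(R(K))^m`, then
`cl J_0(R(√K)) ⊇ M_0(R(√K))^{2m}`. -/
theorem sqrt_of_set_ideals (K : Set ℂ) (hK : IsCompact K) (h0 : (0 : ℂ) ∈ K)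
    (m : ℕ) (hm : 1 ≤ m) (h : idealPow (Mx K 0) m ⊆ closure (Jx K 0)) :
    idealPow (Mx (sqrtSet K) 0) (2 * m) ⊆ closure (Jx (sqrtSet K) 0) := by
  haveI : CompactSpace K := isCompact_iff_compactSpace.mp hK
  haveI : CompactSpace (sqrtSet K) := isCompact_iff_compactSpace.mp (SqrtAux.sqrtSet_compact hK)
  obtain ⟨k, rfl⟩ : ∃ k, m = k + 1 := ⟨m - 1, by omega⟩
  rintro f ⟨n, g, hg, rfl⟩
  have hJ : ∀ i : Fin n, (∏ j, g i j) ∈ closure (Jx (sqrtSet K) 0) := by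
    intro i
    rw [show (∏ j, g i j) = (List.ofFn (g i)).prod from List.prod_ofFn.symm]
    refine SqrtAux.Wclos_sub hK h0 h
      (SqrtAux.list_prod_mem hK h0 k (List.ofFn (g i)) ?_ (by simp; omega))
    intro x hx
    obtain ⟨j, hj⟩ := List.mem_ofFn.mp hx
    rw [← hj]; exact hg i j
  exact AddSubmonoid.sum_mem (SqrtAux.Jclos (sqrtSet K)) (fun i _ => hJ i)

end
end

section
/- Let 𝒟 be a nonempty family of open discs each intersecting the open unit disc 𝔻, set K = 𝔻̄ \ ⋃_{D∈𝒟} D, and suppose 0 ∈ K. Let m ∈ ℕ and suppose 𝒟 satisfies the Browder condition of order m at 0. Then there exists a family 𝒟̃ of open discs such that: (a) 0 ∈ 𝔻̄ \ ⋃_{D̃∈𝒟̃} D̃ ⊆ √K; (b) 𝒟̃ satisfies the Browder condition of order 2m at 0; and (c) the 2m-th order Browder sum for 𝒟̃ at 0 is strictly less than the m-th order Browder sum for 𝒟 at 0. -/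
open scoped ENNReal
open Metric Set Filter

noncomputable section

lemma sqrt_key_real (s c : ℝ) (hs : 0 < s) (hsc : s < c) (w : ℂ)
    (hw : 0 ≤ w.re) (h : ‖w ^ 2 - (c : ℂ)‖ < c - s) :
    ‖w - (Real.sqrt c : ℂ)‖ < Real.sqrt c - Real.sqrt s := by
  have hc0 : 0 < c := hs.trans hsc
  set p := Real.sqrt c with hp_def
  set q := Real.sqrt s with hq_def
  have hp : 0 < p := Real.sqrt_pos.mpr hc0
  have hq : 0 < q := Real.sqrt_pos.mpr hs
  have hpq : q < p := Real.sqrt_lt_sqrt hs.le hsc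
  have hc : p ^ 2 = c := Real.sq_sqrt hc0.le
  have hsq : q ^ 2 = s := Real.sq_sqrt hs.le
  set x := w.re with hx_def
  set y := w.im with hy_def
  -- |w²| > s, i.e. x² + y² > s
  have habs2 : ‖w ^ 2‖ = x ^ 2 + y ^ 2 := by
    rw [norm_pow, Complex.sq_norm, Complex.normSq_apply]; ring
  have hv : q ^ 2 < x ^ 2 + y ^ 2 := by
    have h2 : |‖w ^ 2‖ - ‖(c : ℂ)‖| ≤ ‖w ^ 2 - (c : ℂ)‖ :=
      abs_norm_sub_norm_le _ _
    have h3 : ‖(c : ℂ)‖ = c := by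
      rw [Complex.norm_real, Real.norm_eq_abs, abs_of_pos hc0]
    rw [h3, habs2] at h2
    have h4 := (abs_le.mp h2).1
    rw [hsq]; linarith
  -- normSq identity and hypothesis
  have hA : Complex.normSq (w ^ 2 - (c : ℂ)) = (x ^ 2 + y ^ 2 + c) ^ 2 - 4 * c * x ^ 2 := by
    simp only [Complex.normSq_apply, pow_two, Complex.sub_re, Complex.sub_im, Complex.mul_re,
      Complex.mul_im, Complex.ofReal_re, Complex.ofReal_im, ← hx_def, ← hy_def]
    ring
  have hF1 : (x ^ 2 + y ^ 2 + c) ^ 2 - 4 * c * x ^ 2 < (c - s) ^ 2 := by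
    rw [← hA, ← Complex.sq_norm]
    have := norm_nonneg (w ^ 2 - (c : ℂ))
    nlinarith [h]
  -- main chain
  have h5 : (x ^ 2 + y ^ 2 - q ^ 2 + 2 * p * q) ^ 2 ≤ (x ^ 2 + y ^ 2 + c) ^ 2 - (c - s) ^ 2 := by
    have key : 0 ≤ (p - q) ^ 2 * (x ^ 2 + y ^ 2 - q ^ 2) :=
      mul_nonneg (sq_nonneg _) (by linarith)
    nlinarith [key, hc, hsq]
  have hRHS2 : (x ^ 2 + y ^ 2 - q ^ 2 + 2 * p * q) ^ 2 < (2 * p * x) ^ 2 := by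
    nlinarith [hF1, h5, hc]
  have h6 : x ^ 2 + y ^ 2 - q ^ 2 + 2 * p * q < 2 * p * x := by
    have h2px : 0 ≤ 2 * p * x := by positivity
    exact lt_of_pow_lt_pow_left₀ 2 h2px hRHS2
  -- conclude
  have hfin : Complex.normSq (w - (p : ℂ)) < (p - q) ^ 2 := by
    have hns : Complex.normSq (w - (p : ℂ)) = (x - p) ^ 2 + y ^ 2 := by
      simp only [Complex.normSq_apply, Complex.sub_re, Complex.sub_im, Complex.ofReal_re,
        Complex.ofReal_im, ← hx_def, ← hy_def]
      ring
    rw [hns]; nlinarith [h6]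
  have habs : (‖w - (p : ℂ)‖) ^ 2 < (p - q) ^ 2 := by
    rw [Complex.sq_norm]; exact hfin
  exact lt_of_pow_lt_pow_left₀ 2 (by linarith) habs

lemma sqrt_key (cc b : ℂ) (ρ : ℝ) (hb : b ^ 2 = cc) (hρ : 0 < ρ)
    (hρc : ρ < ‖cc‖) (w : ℂ) (hside : 0 ≤ (w * (starRingEnd ℂ) b).re)
    (h : ‖w ^ 2 - cc‖ < ρ) :
    ‖w - b‖ < Real.sqrt (‖cc‖) - Real.sqrt (‖cc‖ - ρ) := by
  have hcc0 : 0 < ‖cc‖ := hρ.trans hρc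
  have hb0 : b ≠ 0 := by
    intro h0
    rw [h0] at hb
    simp [← hb] at hcc0
  set d : ℝ := ‖b‖ with hd_def
  have hd : 0 < d := by simpa [hd_def] using (norm_pos_iff.mpr hb0)
  have hd0 : (d : ℂ) ≠ 0 := by exact_mod_cast hd.ne'
  have hd2 : ((d : ℂ)) ^ 2 = (starRingEnd ℂ) b * b := by
    rw [mul_comm, Complex.mul_conj, hd_def, Complex.normSq_eq_norm_sq]
    norm_cast
  have habscc : ‖cc‖ = d ^ 2 := by rw [← hb, norm_pow]
  have hsd : Real.sqrt (‖cc‖) = d := by rw [habscc, Real.sqrt_sq hd.le]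
  set w' : ℂ := ((starRingEnd ℂ) b * w) / (d : ℂ) with hw'_def
  have heq : w' ^ 2 - ((‖cc‖ : ℝ) : ℂ)
      = ((starRingEnd ℂ) b) ^ 2 * (w ^ 2 - cc) / ((d : ℂ)) ^ 2 := by
    rw [hw'_def, habscc]
    push_cast
    field_simp
    linear_combination (-((starRingEnd ℂ) b) ^ 2) * hb
      - ((d : ℂ) ^ 2 + (starRingEnd ℂ) b * b) * hd2
  have habs_eq : ‖w' ^ 2 - ((‖cc‖ : ℝ) : ℂ)‖ = ‖w ^ 2 - cc‖ := by
    rw [heq, norm_div, norm_mul, norm_pow, norm_pow]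
    rw [Complex.norm_conj, Complex.norm_real, Real.norm_eq_abs, abs_of_pos hd]
    field_simp [← hd_def]
    rw [← hd_def]; ring
  have hre : 0 ≤ w'.re := by
    rw [hw'_def, Complex.div_ofReal_re]
    have : ((starRingEnd ℂ) b * w).re = (w * (starRingEnd ℂ) b).re := by rw [mul_comm]
    rw [this]
    positivity
  have hmain := sqrt_key_real (‖cc‖ - ρ) (‖cc‖) (by linarith) (by linarith)
    w' hre (by rw [habs_eq]; simpa using h)
  have hw_b : w - b = (b / (d : ℂ)) * (w' - ((Real.sqrt (‖cc‖) : ℝ) : ℂ)) := by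
    rw [hw'_def, hsd]
    field_simp
    linear_combination w * hd2
  rw [hw_b, norm_mul, norm_div, Complex.norm_real, Real.norm_eq_abs, abs_of_pos hd, ← hd_def, div_self hd.ne',
    one_mul]
  exact hmain

/-- Theorem 1.8: taking square roots of a Swiss cheese, halving the Browder order. -/
theorem sqrt_of_cheese {ι : Type*} [Nonempty ι] (c : ι → ℂ) (ρ : ι → ℝ)
    (hρ : ∀ i, 0 < ρ i)
    (hint : ∀ i, (ball (c i) (ρ i) ∩ ball (0 : ℂ) 1).Nonempty)
    (K : Set ℂ) (hK : K = closedBall (0 : ℂ) 1 \ ⋃ i, ball (c i) (ρ i))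
    (h0 : (0 : ℂ) ∈ K) (m : ℕ) (hm : 1 ≤ m)
    (hB : browderSum c ρ 0 m < ⊤) :
    ∃ (ι' : Type) (c' : ι' → ℂ) (ρ' : ι' → ℝ),
      (∀ i, 0 < ρ' i) ∧
      (0 : ℂ) ∈ closedBall (0 : ℂ) 1 \ ⋃ i, ball (c' i) (ρ' i) ∧
      closedBall (0 : ℂ) 1 \ ⋃ i, ball (c' i) (ρ' i) ⊆ sqrtSet K ∧
      browderSum c' ρ' 0 (2 * m) < ⊤ ∧
      browderSum c' ρ' 0 (2 * m) < browderSum c ρ 0 m := by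
  classical
  -- 0 is outside every disc
  have h0K : ∀ i, (0 : ℂ) ∉ ball (c i) (ρ i) := by
    intro i hi
    rw [hK] at h0
    exact h0.2 (mem_iUnion.mpr ⟨i, hi⟩)
  have hsnn : ∀ i, 0 ≤ ‖c i‖ - ρ i := by
    intro i
    have h1 := h0K i
    simp only [mem_ball, Complex.dist_eq, zero_sub, norm_neg, not_lt] at h1
    linarith
  have hd0c : ∀ i, dist (0 : ℂ) (c i) = ‖c i‖ := by
    intro i
    simp [Complex.dist_eq]
  have hterm_old : ∀ i, browderTerm 0 (c i) (ρ i) m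
      = ENNReal.ofReal (ρ i) / ENNReal.ofReal ((‖c i‖ - ρ i) ^ (m + 1)) := by
    intro i
    rw [browderTerm, hd0c i, abs_of_nonneg (hsnn i)]
  have hBne : browderSum c ρ 0 m ≠ ⊤ := hB.ne
  -- strict positivity of s i
  have hspos : ∀ i, 0 < ‖c i‖ - ρ i := by
    intro i
    rcases (hsnn i).lt_or_eq with h1 | h1
    · exact h1
    · exfalso
      apply hBne
      have hti : browderTerm 0 (c i) (ρ i) m = ⊤ := by
        rw [hterm_old i, ← h1, zero_pow (Nat.succ_ne_zero m), ENNReal.ofReal_zero,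
          ENNReal.div_zero (ENNReal.ofReal_pos.mpr (hρ i)).ne']
      have h2 : (⊤ : ℝ≥0∞) ≤ ∑' i, browderTerm 0 (c i) (ρ i) m := by
        rw [← hti]; exact ENNReal.le_tsum i
      rw [browderSum, eq_top_iff]
      exact le_add_of_nonneg_of_le zero_le h2
  -- square roots of the centers
  have hex : ∀ i, ∃ bb : ℂ, bb ^ 2 = c i := fun i =>
    IsAlgClosed.exists_pow_nat_eq (c i) (n := 2) (by norm_num)
  choose b hb using hex
  set p : ι → ℝ := fun i => Real.sqrt (‖c i‖) with hp_def
  set q : ι → ℝ := fun i => Real.sqrt (‖c i‖ - ρ i) with hq_def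
  have hqpos : ∀ i, 0 < q i := fun i => Real.sqrt_pos.mpr (hspos i)
  have hqp : ∀ i, q i < p i := fun i =>
    Real.sqrt_lt_sqrt (hspos i).le (by linarith [hρ i])
  have hppos : ∀ i, 0 < p i := fun i => (hqpos i).trans (hqp i)
  have habsb : ∀ i, ‖b i‖ = p i := by
    intro i
    show ‖b i‖ = Real.sqrt (‖c i‖)
    rw [← hb i, norm_pow, Real.sqrt_sq (norm_nonneg _)]
  -- the new family of discs
  set h : ι × Bool → ℂ × ℝ :=
    fun x => (cond x.2 (b x.1) (-b x.1), p x.1 - q x.1) with hh_def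
  have habsh : ∀ x : ι × Bool, ‖(h x).1‖ = p x.1 := by
    rintro ⟨i, (_ | _)⟩ <;> simp [hh_def, habsb i]
  have hdh : ∀ x : ι × Bool, dist (0 : ℂ) (h x).1 = p x.1 := by
    intro x
    rw [Complex.dist_eq, zero_sub, norm_neg, habsh x]
  have hrpos : ∀ x : ι × Bool, 0 < (h x).2 := by
    intro x; simp only [hh_def]; linarith [hqp x.1]
  -- covering property
  have hcover : ∀ (i : ι) (z : ℂ), ‖z ^ 2 - c i‖ < ρ i →
      z ∈ ball (h (i, true)).1 (h (i, true)).2 ∨ z ∈ ball (h (i, false)).1 (h (i, false)).2 := by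
    intro i z hz
    have hρc : ρ i < ‖c i‖ := by linarith [hspos i]
    rcases le_or_gt 0 ((z * (starRingEnd ℂ) (b i)).re) with hside | hside
    · left
      have := sqrt_key (c i) (b i) (ρ i) (hb i) (hρ i) hρc z hside hz
      simp only [hh_def, mem_ball, Complex.dist_eq, cond_true]
      exact this
    · right
      have hside' : 0 ≤ (z * (starRingEnd ℂ) (-b i)).re := by
        rw [map_neg, mul_neg, Complex.neg_re]
        linarith
      have hbneg : (-b i) ^ 2 = c i := by rw [← hb i]; ring
      have := sqrt_key (c i) (-b i) (ρ i) hbneg (hρ i) hρc z hside' hz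
      simp only [hh_def, mem_ball, Complex.dist_eq, cond_false]
      exact this
  -- the index type
  refine ⟨↥(Set.range h), fun y => (y : ℂ × ℝ).1, fun y => (y : ℂ × ℝ).2, ?_, ?_, ?_, ?_, ?_⟩
  · rintro ⟨y, x, rfl⟩
    exact hrpos x
  · constructor
    · exact mem_closedBall_self zero_le_one
    · intro hmem
      rw [mem_iUnion] at hmem
      obtain ⟨⟨y, x, rfl⟩, hy⟩ := hmem
      rw [mem_ball, hdh x] at hy
      have := hqpos x.1
      simp only [hh_def] at hy
      linarith
  · intro z hz
    obtain ⟨hz1, hz2⟩ := hz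
    rw [hK]
    have hzabs : ‖z‖ ≤ 1 := by
      rw [mem_closedBall, Complex.dist_eq, sub_zero] at hz1
      exact hz1
    constructor
    · rw [mem_closedBall, Complex.dist_eq, sub_zero, norm_pow]
      exact pow_le_one₀ (norm_nonneg z) hzabs
    · intro hmem
      rw [mem_iUnion] at hmem
      obtain ⟨i, hi⟩ := hmem
      rw [mem_ball, Complex.dist_eq] at hi
      rcases hcover i z hi with hc1 | hc1
      · exact hz2 (mem_iUnion.mpr ⟨⟨h (i, true), ⟨(i, true), rfl⟩⟩, hc1⟩)
      · exact hz2 (mem_iUnion.mpr ⟨⟨h (i, false), ⟨(i, false), rfl⟩⟩, hc1⟩)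
  all_goals {
    -- both sum goals: prove the strict inequality first, then finish
    have hT : ∀ x : ι × Bool,
        browderTerm 0 (h x).1 (h x).2 (2 * m)
          = ENNReal.ofReal ((p x.1 - q x.1) / q x.1 ^ (2 * m + 1)) := by
      intro x
      rw [browderTerm, hdh x]
      have h1 : (h x).2 = p x.1 - q x.1 := rfl
      rw [h1]
      have h2 : |p x.1 - (p x.1 - q x.1)| = q x.1 := by
        rw [abs_of_nonneg (by linarith [hqpos x.1])]; ring
      rw [h2, ENNReal.ofReal_div_of_pos (pow_pos (hqpos x.1) _)]
    have hTold : ∀ i, browderTerm 0 (c i) (ρ i) m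
        = ENNReal.ofReal (ρ i / (‖c i‖ - ρ i) ^ (m + 1)) := by
      intro i
      rw [hterm_old i, ENNReal.ofReal_div_of_pos (pow_pos (hspos i) _)]
    -- per-index strict inequality
    have hper : ∀ i : ι,
        ENNReal.ofReal ((p i - q i) / q i ^ (2 * m + 1))
          + ENNReal.ofReal ((p i - q i) / q i ^ (2 * m + 1))
          < browderTerm 0 (c i) (ρ i) m := by
      intro i
      have hnn1 : 0 ≤ (p i - q i) / q i ^ (2 * m + 1) :=
        div_nonneg (by linarith [hqp i]) (pow_nonneg (hqpos i).le _)
      rw [hTold i, ← ENNReal.ofReal_add hnn1 hnn1]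
      rw [ENNReal.ofReal_lt_ofReal_iff_of_nonneg (by linarith)]
      have hp2 : p i ^ 2 = ‖c i‖ := Real.sq_sqrt (norm_nonneg _)
      have hq2 : q i ^ 2 = ‖c i‖ - ρ i := Real.sq_sqrt (hsnn i)
      have hρeq : ρ i = p i ^ 2 - q i ^ 2 := by rw [hp2, hq2]; ring
      have hseq : ‖c i‖ - ρ i = q i ^ 2 := hq2.symm
      rw [hseq, hρeq, ← add_div]
      rw [div_lt_div_iff₀ (pow_pos (hqpos i) _) (pow_pos (pow_pos (hqpos i) 2) _)]
      have he2 : 2 * (m + 1) = 2 * m + 1 + 1 := by omega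
      have hexp : (q i ^ 2) ^ (m + 1) = q i ^ (2 * m + 1) * q i := by
        rw [← pow_mul, he2, pow_succ]
      rw [hexp]
      have hkey : 0 < q i ^ (2 * m + 1) * (p i - q i) ^ 2 :=
        mul_pos (pow_pos (hqpos i) _) (pow_pos (sub_pos.mpr (hqp i)) 2)
      nlinarith [hkey]
    -- sum over the range is at most the sum over ι × Bool
    have hsec : ∀ y : ↥(Set.range h), ∃ x : ι × Bool, h x = (y : ℂ × ℝ) := fun y => y.2
    choose σ hσ using hsec
    have hσinj : Function.Injective σ := by
      intro y1 y2 hy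
      apply Subtype.ext
      rw [← hσ y1, ← hσ y2, hy]
    have hsum1 : ∑' y : ↥(Set.range h), browderTerm 0 ((y : ℂ × ℝ)).1 ((y : ℂ × ℝ)).2 (2 * m)
        ≤ ∑' x : ι × Bool, browderTerm 0 (h x).1 (h x).2 (2 * m) := by
      have heq1 : ∀ y : ↥(Set.range h),
          browderTerm 0 ((y : ℂ × ℝ)).1 ((y : ℂ × ℝ)).2 (2 * m)
            = (fun x => browderTerm 0 (h x).1 (h x).2 (2 * m)) (σ y) := by
        intro y
        rw [← hσ y]
      rw [tsum_congr heq1]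
      exact ENNReal.tsum_comp_le_tsum_of_injective hσinj _
    have hsum2 : ∑' x : ι × Bool, browderTerm 0 (h x).1 (h x).2 (2 * m)
        = ∑' i : ι, (ENNReal.ofReal ((p i - q i) / q i ^ (2 * m + 1))
            + ENNReal.ofReal ((p i - q i) / q i ^ (2 * m + 1))) := by
      rw [ENNReal.tsum_prod']
      apply tsum_congr
      intro i
      rw [tsum_fintype, Fintype.sum_bool, hT (i, true), hT (i, false)]
    -- totals: strict inequality of the tails
    have htail_ne : ∑' i, browderTerm 0 (c i) (ρ i) m ≠ ⊤ := by
      intro htop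
      apply hBne
      rw [browderSum, htop, add_top]
    have htail : ∑' i : ι, (ENNReal.ofReal ((p i - q i) / q i ^ (2 * m + 1))
            + ENNReal.ofReal ((p i - q i) / q i ^ (2 * m + 1)))
        < ∑' i, browderTerm 0 (c i) (ρ i) m := by
      set A : ι → ℝ≥0∞ := fun i => ENNReal.ofReal ((p i - q i) / q i ^ (2 * m + 1))
          + ENNReal.ofReal ((p i - q i) / q i ^ (2 * m + 1)) with hA_def
      set T : ι → ℝ≥0∞ := fun i => browderTerm 0 (c i) (ρ i) m with hT_def
      obtain ⟨i₀⟩ := (inferInstance : Nonempty ι)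
      rw [ENNReal.tsum_eq_add_tsum_ite (f := A) i₀, ENNReal.tsum_eq_add_tsum_ite (f := T) i₀]
      have hrest_le : ∑' i, (if i = i₀ then 0 else A i) ≤ ∑' i, (if i = i₀ then 0 else T i) := by
        apply ENNReal.tsum_le_tsum
        intro i
        by_cases hii : i = i₀ <;> simp [hii, hA_def, hT_def, (hper i).le]
      have hrest_ne : ∑' i, (if i = i₀ then 0 else T i) ≠ ⊤ := by
        intro htop
        apply htail_ne
        rw [eq_top_iff, ← htop]
        apply ENNReal.tsum_le_tsum
        intro i
        by_cases hii : i = i₀ <;> simp [hii, hT_def]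
      calc A i₀ + ∑' i, (if i = i₀ then 0 else A i)
          ≤ A i₀ + ∑' i, (if i = i₀ then 0 else T i) := by gcongr
        _ < T i₀ + ∑' i, (if i = i₀ then 0 else T i) :=
            ENNReal.add_lt_add_right hrest_ne (hper i₀)
    have hmain : browderSum (fun y : ↥(Set.range h) => ((y : ℂ × ℝ)).1)
        (fun y : ↥(Set.range h) => ((y : ℂ × ℝ)).2) 0 (2 * m) < browderSum c ρ 0 m := by
      rw [browderSum, browderSum]
      have hT0 : ∀ k : ℕ, browderTerm (0 : ℂ) 0 1 k = 1 := by
        intro k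
        rw [browderTerm]
        simp
      rw [hT0, hT0]
      apply ENNReal.add_lt_add_left ENNReal.one_ne_top
      calc ∑' y : ↥(Set.range h), browderTerm 0 ((y : ℂ × ℝ)).1 ((y : ℂ × ℝ)).2 (2 * m)
          ≤ _ := hsum1
        _ = _ := hsum2
        _ < _ := htail
    first
      | exact hmain.trans hB
      | exact hmain
  }

end
end

section
/- Let A be a commutative unital complex Banach algebra and let I be a closed ideal in A. Suppose that the quotient I/cl(I²) is one-dimensional as a complex vector space, and let f ∈ I \ cl(I²). Then for all m ∈ ℕ, cl(I^m) = cl(I^{m+1}) + ℂ·f^m; consequently the quotient cl(I^m)/cl(I^{m+1}) has dimension at most 1, and cl(I^m) = cl(I^{m+1}) if and only if f^m ∈ cl(I^{m+1}). -/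
open scoped ENNReal
open Metric Set

noncomputable section

/-- The topological closure of the `m`-th power of an ideal, viewed as a complex
submodule. -/
def clPow {A : Type*} [NormedCommRing A] [NormedAlgebra ℂ A]
    (I : Ideal A) (m : ℕ) : Submodule ℂ A :=
  ((I ^ m).restrictScalars ℂ).topologicalClosure

/-- There is a nondegenerate bounded point derivation of order `m` at the complex
homomorphism `φ` on `A`. -/
def HasNBPDAlg {A : Type*} [NormedCommRing A] [NormedAlgebra ℂ A]
    (φ : A →ₐ[ℂ] ℂ) (m : ℕ) : Prop :=
  ∃ d : ℕ → (A →ₗ[ℂ] ℂ),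
    d 0 = φ.toLinearMap ∧
    (∀ k, 1 ≤ k → k ≤ m → ∀ f g : A,
      d k (f * g) = ∑ j ∈ Finset.range (k + 1), d j f * d (k - j) g) ∧
    (∀ k ≤ m, Continuous (d k)) ∧
    d 1 ≠ 0

section Aux

variable {A : Type*} [NormedCommRing A] [NormedAlgebra ℂ A]

lemma clPow_coe (I : Ideal A) (m : ℕ) :
    (clPow I m : Set A) = closure ((I ^ m : Ideal A) : Set A) :=
  Submodule.topologicalClosure_coe _

lemma mem_clPow_iff {I : Ideal A} {m : ℕ} {x : A} :
    x ∈ clPow I m ↔ x ∈ closure ((I ^ m : Ideal A) : Set A) := by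
  rw [← SetLike.mem_coe, clPow_coe]

lemma isClosed_sup_span (S : Submodule ℂ A) (hS : IsClosed (S : Set A)) (v : A) :
    IsClosed ((S ⊔ Submodule.span ℂ {v} : Submodule ℂ A) : Set A) := by
  haveI : IsClosed (S : Set A) := hS
  have h1 : S ⊔ Submodule.span ℂ {v}
      = Submodule.comap S.mkQ (Submodule.span ℂ {S.mkQ v}) := by
    rw [← Set.image_singleton, ← Submodule.map_span, Submodule.comap_map_eq,
      Submodule.ker_mkQ]
    exact sup_comm _ _
  rw [h1]
  have h2 : IsClosed ((Submodule.span ℂ {S.mkQ v} : Submodule ℂ (A ⧸ S)) : Set (A ⧸ S)) :=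
    Submodule.closed_of_finiteDimensional _
  exact h2.preimage S.isOpenQuotientMap_mkQ.continuous

lemma mul_mem_clPow {I : Ideal A} {k j : ℕ} {x y : A}
    (hx : x ∈ (I ^ k : Ideal A)) (hy : y ∈ clPow I j) : x * y ∈ clPow I (k + j) := by
  rw [mem_clPow_iff] at hy ⊢
  refine map_mem_closure (continuous_mul_left x) hy ?_
  intro z hz
  have : x * z ∈ (I ^ k : Ideal A) * (I ^ j : Ideal A) := Submodule.mul_mem_mul hx hz
  rwa [← pow_add] at this

end Aux

/-- Lemma 2.4: if `I` is a closed ideal with `dim(I/cl I²) = 1` and `f ∈ I \ cl I²`,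
then `cl(I^m) = cl(I^{m+1}) + ℂ f^m` for all `m ≥ 1`; consequently
`dim(cl I^m / cl I^{m+1}) ≤ 1`, and `cl(I^m) = cl(I^{m+1})` iff `f^m ∈ cl(I^{m+1})`. -/
theorem codim_one_powers {A : Type*} [NormedCommRing A] [NormedAlgebra ℂ A]
    [CompleteSpace A]
    (I : Ideal A) (hI : IsClosed (I : Set A)) (f : A) (hf : f ∈ I)
    (hf2 : f ∉ closure ((I ^ 2 : Ideal A) : Set A))
    (hdim : Module.rank ℂ
      (↥(I.restrictScalars ℂ) ⧸
        Submodule.comap (I.restrictScalars ℂ).subtype (clPow I 2)) = 1) :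
    ∀ m : ℕ, 1 ≤ m →
      closure ((I ^ m : Ideal A) : Set A)
        = {x : A | ∃ y ∈ closure ((I ^ (m + 1) : Ideal A) : Set A),
            ∃ α : ℂ, x = y + α • f ^ m} ∧
      Module.rank ℂ
        (↥(clPow I m) ⧸ Submodule.comap (clPow I m).subtype (clPow I (m + 1))) ≤ 1 ∧
      (closure ((I ^ m : Ideal A) : Set A) = closure ((I ^ (m + 1) : Ideal A) : Set A)
        ↔ f ^ m ∈ closure ((I ^ (m + 1) : Ideal A) : Set A)) := by
  -- the base decomposition of I
  have hbase : ∀ x ∈ I, ∃ y ∈ clPow I 2, ∃ α : ℂ, x = y + α • f := by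
    have hrank : Module.rank ℂ
        (↥(I.restrictScalars ℂ) ⧸
          Submodule.comap (I.restrictScalars ℂ).subtype (clPow I 2)) ≤ 1 := hdim.le
    obtain ⟨v₀, hv₀⟩ := rank_le_one_iff.mp hrank
    set P := Submodule.comap (I.restrictScalars ℂ).subtype (clPow I 2)
    have hfbar : (Submodule.Quotient.mk (⟨f, hf⟩ : ↥(I.restrictScalars ℂ)) : _ ⧸ P) ≠ 0 := by
      intro h
      rw [Submodule.Quotient.mk_eq_zero] at h
      exact hf2 (mem_clPow_iff.mp h)
    obtain ⟨c, hc⟩ := hv₀ (Submodule.Quotient.mk (⟨f, hf⟩ : ↥(I.restrictScalars ℂ)))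
    have hcne : c ≠ 0 := by rintro rfl; simp at hc; exact hfbar hc.symm
    intro x hx
    obtain ⟨r, hr⟩ := hv₀ (Submodule.Quotient.mk (⟨x, hx⟩ : ↥(I.restrictScalars ℂ)))
    have key : (Submodule.Quotient.mk (⟨x, hx⟩ : ↥(I.restrictScalars ℂ)) : _ ⧸ P)
        = (r * c⁻¹) • Submodule.Quotient.mk (⟨f, hf⟩ : ↥(I.restrictScalars ℂ)) := by
      rw [← hc, ← hr, smul_smul, mul_assoc, inv_mul_cancel₀ hcne, mul_one]
    have hP : (⟨x, hx⟩ - (r * c⁻¹) • ⟨f, hf⟩ : ↥(I.restrictScalars ℂ)) ∈ P := by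
      rw [← Submodule.Quotient.mk_eq_zero, Submodule.Quotient.mk_sub,
        Submodule.Quotient.mk_smul, key, sub_self]
    have hmem : x - (r * c⁻¹) • f ∈ clPow I 2 := hP
    exact ⟨x - (r * c⁻¹) • f, hmem, r * c⁻¹, by abel⟩
  -- the key claim
  have key : ∀ m : ℕ, 1 ≤ m →
      clPow I m = clPow I (m + 1) ⊔ Submodule.span ℂ {f ^ m} := by
    have hle : ∀ m : ℕ, clPow I (m + 1) ⊔ Submodule.span ℂ {f ^ m} ≤ clPow I m := by
      intro m
      refine sup_le ?_ ?_
      · refine Submodule.topologicalClosure_mono ?_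
        intro x hx
        exact Ideal.pow_le_pow_right (Nat.le_succ m) hx
      · rw [Submodule.span_le, Set.singleton_subset_iff]
        exact subset_closure (Ideal.pow_mem_pow hf m)
    intro m hm
    induction m with
    | zero => omega
    | succ n ih =>
      rcases Nat.eq_or_lt_of_le hm with h1 | h1
      · -- base case m = 1
        have hn : n = 0 := by omega
        subst hn
        refine le_antisymm ?_ (hle 1)
        have hclosedI : clPow I 1 = I.restrictScalars ℂ := by
          apply SetLike.coe_injective
          rw [clPow_coe, pow_one]
          exact hI.closure_eq
        rw [hclosedI]
        intro x hx
        obtain ⟨y, hy, α, rfl⟩ := hbase x hx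
        rw [pow_one]
        exact Submodule.add_mem _ (Submodule.mem_sup_left (by simpa using hy))
          (Submodule.mem_sup_right (Submodule.smul_mem _ _ (Submodule.mem_span_singleton_self _)))
      · -- inductive step: n ≥ 1
        have hn : 1 ≤ n := by omega
        have IH := ih hn
        refine le_antisymm ?_ (hle (n + 1))
        have hS : IsClosed ((clPow I (n + 2) ⊔ Submodule.span ℂ {f ^ (n + 1)} :
            Submodule ℂ A) : Set A) := by
          refine isClosed_sup_span _ ?_ _
          rw [clPow_coe]; exact isClosed_closure
        refine Submodule.topologicalClosure_minimal _ ?_ hS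
        intro x hx
        have hx' : x ∈ (I ^ n : Ideal A) * I := by rwa [← pow_succ]
        refine Submodule.mul_induction_on hx' ?_ ?_
        · intro a ha b hb
          have haM : a ∈ clPow I (n + 1) ⊔ Submodule.span ℂ {f ^ n} := by
            rw [← IH]; exact subset_closure ha
          obtain ⟨y, hy, z, hz, rfl⟩ := Submodule.mem_sup.mp haM
          obtain ⟨α, rfl⟩ := Submodule.mem_span_singleton.mp hz
          obtain ⟨w, hw, β, rfl⟩ := hbase b hb
          have hdec : (y + α • f ^ n) * (w + β • f)
              = (w + β • f) * y + α • (f ^ n * w) + (α * β) • f ^ (n + 1) := by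
            simp only [add_mul, mul_add, smul_mul_assoc, mul_smul_comm, smul_smul, smul_add,
              pow_succ, mul_comm, mul_left_comm]
            abel
          rw [hdec]
          refine Submodule.add_mem _ (Submodule.add_mem _ ?_ ?_) ?_
          · refine Submodule.mem_sup_left ?_
            have hb' : w + β • f ∈ (I ^ 1 : Ideal A) := by rwa [pow_one]
            have := mul_mem_clPow hb' hy
            rwa [Nat.one_add] at this
          · refine Submodule.mem_sup_left ?_
            exact Submodule.smul_mem _ _ (mul_mem_clPow (k := n) (j := 2) (Ideal.pow_mem_pow hf n) hw)
          · exact Submodule.mem_sup_right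
              (Submodule.smul_mem _ _ (Submodule.mem_span_singleton_self _))
        · intro a b hA hB
          exact Submodule.add_mem _ hA hB
  -- conclusions
  intro m hm
  have hkey := key m hm
  have hsetsub : closure ((I ^ m : Ideal A) : Set A)
      = ((clPow I (m + 1) ⊔ Submodule.span ℂ {f ^ m} : Submodule ℂ A) : Set A) := by
    rw [← hkey, clPow_coe]
  have hfm : f ^ m ∈ clPow I m := mem_clPow_iff.mpr (subset_closure (Ideal.pow_mem_pow hf m))
  have hfm' : f ^ m ∈ clPow I m := hfm
  refine ⟨?_, ?_, ?_⟩
  · -- set equality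
    rw [hsetsub]
    ext x
    simp only [SetLike.mem_coe, Submodule.mem_sup, Set.mem_setOf_eq]
    constructor
    · rintro ⟨y, hy, z, hz, rfl⟩
      obtain ⟨α, rfl⟩ := Submodule.mem_span_singleton.mp hz
      exact ⟨y, mem_clPow_iff.mp hy, α, rfl⟩
    · rintro ⟨y, hy, α, rfl⟩
      exact ⟨y, mem_clPow_iff.mpr hy, α • f ^ m,
        Submodule.smul_mem _ _ (Submodule.mem_span_singleton_self _), rfl⟩
  · -- rank bound
    set P := Submodule.comap (clPow I m).subtype (clPow I (m + 1))
    refine rank_le_one_iff.mpr ⟨Submodule.Quotient.mk (⟨f ^ m, hfm⟩ : ↥(clPow I m)), ?_⟩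
    intro v
    obtain ⟨⟨x, hx⟩, rfl⟩ := Submodule.Quotient.mk_surjective P v
    have hx' : x ∈ clPow I (m + 1) ⊔ Submodule.span ℂ {f ^ m} := hkey ▸ hx
    obtain ⟨y, hy, z, hz, hxyz⟩ := Submodule.mem_sup.mp hx'
    obtain ⟨α, rfl⟩ := Submodule.mem_span_singleton.mp hz
    refine ⟨α, ?_⟩
    rw [← Submodule.Quotient.mk_smul, ← sub_eq_zero, ← Submodule.Quotient.mk_sub,
      Submodule.Quotient.mk_eq_zero]
    show (↑((α • ⟨f ^ m, hfm⟩ : ↥(clPow I m)) - ⟨x, hx⟩) : A) ∈ clPow I (m + 1)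
    have : (↑((α • ⟨f ^ m, hfm⟩ : ↥(clPow I m)) - ⟨x, hx⟩) : A) = α • f ^ m - x := rfl
    rw [this, ← hxyz]
    simpa using Submodule.neg_mem _ hy
  · -- the iff
    constructor
    · intro h
      rw [← h]
      exact subset_closure (Ideal.pow_mem_pow hf m)
    · intro h
      have hspan : Submodule.span ℂ {f ^ m} ≤ clPow I (m + 1) := by
        rw [Submodule.span_le, Set.singleton_subset_iff]
        exact mem_clPow_iff.mpr h
      have : clPow I m = clPow I (m + 1) := by
        rw [hkey, sup_eq_left.mpr hspan]
      calc closure ((I ^ m : Ideal A) : Set A) = (clPow I m : Set A) := (clPow_coe I m).symm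
        _ = (clPow I (m + 1) : Set A) := by rw [this]
        _ = closure ((I ^ (m + 1) : Ideal A) : Set A) := clPow_coe I (m + 1)

end
end

section
/- Let A be a commutative unital complex Banach algebra, let φ be a nonzero complex homomorphism on A, set M = ker φ, and let m ∈ ℕ. Suppose that the quotient M/cl(M²) has complex dimension at most 1. Then there is a nondegenerate bounded point derivation of order m at φ on A if and only if cl(M^m) ≠ cl(M^{m+1}), in which case M ⊋ cl(M²) ⊋ ⋯ ⊋ cl(M^m) ⊋ cl(M^{m+1}). -/
open scoped ENNReal
open Metric Set

noncomputable section

set_option linter.unusedSectionVars false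
set_option maxHeartbeats 1000000

section PDAux

variable {A : Type*} [NormedCommRing A] [NormedAlgebra ℂ A] [CompleteSpace A]

lemma pd_coe_clPow (M : Ideal A) (k : ℕ) :
    (clPow M k : Set A) = closure ((M ^ k : Ideal A) : Set A) := by
  simp [clPow, Submodule.topologicalClosure_coe]

lemma pd_mem_clPow_iff {M : Ideal A} {k : ℕ} {a : A} :
    a ∈ clPow M k ↔ a ∈ closure ((M ^ k : Ideal A) : Set A) := by
  rw [← SetLike.mem_coe, pd_coe_clPow]

lemma pd_mem_clPow_of_mem {M : Ideal A} {k : ℕ} {a : A} (h : a ∈ (M ^ k : Ideal A)) :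
    a ∈ clPow M k := pd_mem_clPow_iff.2 (subset_closure h)

lemma pd_clPow_anti (M : Ideal A) {j k : ℕ} (h : j ≤ k) : clPow M k ≤ clPow M j :=
  Submodule.topologicalClosure_mono (fun _ ha => Ideal.pow_le_pow_right h ha)

lemma pd_clPow_mul_mem {M : Ideal A} {j l : ℕ} {a b : A}
    (ha : a ∈ clPow M j) (hb : b ∈ clPow M l) : a * b ∈ clPow M (j + l) := by
  rw [pd_mem_clPow_iff] at *
  exact map_mem_closure₂ continuous_mul ha hb
    (fun x hx y hy => by rw [pow_add]; exact Ideal.mul_mem_mul hx hy)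

lemma pd_mul_mem_clPow {M : Ideal A} {k : ℕ} (a : A) {b : A}
    (hb : b ∈ clPow M k) : a * b ∈ clPow M k := by
  rw [pd_mem_clPow_iff] at *
  exact map_mem_closure (continuous_mul_left a) hb
    (fun x hx => Ideal.mul_mem_left _ a hx)

lemma pd_phi_zero_on_clPow (φ : A →ₐ[ℂ] ℂ) {M : Ideal A} (hM : M = RingHom.ker φ)
    {k : ℕ} (hk : 1 ≤ k) {a : A} (ha : a ∈ clPow M k) : φ a = 0 := by
  rw [pd_mem_clPow_iff] at ha
  have hclosed : IsClosed (φ ⁻¹' {0} : Set A) :=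
    IsClosed.preimage (map_continuous φ.toContinuousLinearMap) isClosed_singleton
  have hsub : ((M ^ k : Ideal A) : Set A) ⊆ φ ⁻¹' {0} := by
    intro x hx
    have hxM : x ∈ M := Ideal.pow_le_self (Nat.one_le_iff_ne_zero.mp hk) hx
    rw [hM, RingHom.mem_ker] at hxM
    simpa using hxM
  simpa using hclosed.closure_subset_iff.2 hsub ha

lemma pd_mkQ_continuous {N : Submodule ℂ A} : Continuous N.mkQ :=
  AddMonoidHomClass.continuous_of_bound N.mkQ 1
    (fun a => by simpa using Submodule.Quotient.norm_mk_le N a)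

variable (φ : A →ₐ[ℂ] ℂ) {M : Ideal A} {m : ℕ} {d : ℕ → (A →ₗ[ℂ] ℂ)} {x : A}

include φ in
lemma pd_d_zero_on_pow (hM : M = RingHom.ker φ) (hd0 : d 0 = φ.toLinearMap)
    (hleib : ∀ k, 1 ≤ k → k ≤ m → ∀ f g : A,
      d k (f * g) = ∑ j ∈ Finset.range (k + 1), d j f * d (k - j) g) :
    ∀ k, k ≤ m → ∀ a ∈ (M ^ (k + 1) : Ideal A), d k a = 0 := by
  intro k
  induction k using Nat.strong_induction_on with
  | _ k IH =>
    intro hkm a ha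
    rcases Nat.eq_zero_or_pos k with rfl | hk
    · rw [pow_one] at ha
      rw [hM, RingHom.mem_ker] at ha
      rw [hd0]; simpa using ha
    · rw [pow_succ] at ha
      refine Submodule.mul_induction_on ha (fun f hf g hg => ?_)
        (fun u v hu' hv' => by rw [map_add, hu', hv', add_zero])
      rw [hleib k hk hkm f g]
      apply Finset.sum_eq_zero
      intro j hj
      rw [Finset.mem_range, Nat.lt_succ_iff] at hj
      rcases eq_or_lt_of_le hj with rfl | hjk
      · have : d 0 g = 0 := by
          rw [hd0]
          rw [hM, RingHom.mem_ker] at hg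
          simpa using hg
        rw [Nat.sub_self, this, mul_zero]
      · have hfj : f ∈ (M ^ (j + 1) : Ideal A) :=
          Ideal.pow_le_pow_right (Nat.succ_le_of_lt hjk) hf
        rw [IH j hjk (le_trans (le_of_lt hjk) hkm) f hfj, zero_mul]

lemma pd_d_one_one (hm : 1 ≤ m) (hd0 : d 0 = φ.toLinearMap)
    (hleib : ∀ k, 1 ≤ k → k ≤ m → ∀ f g : A,
      d k (f * g) = ∑ j ∈ Finset.range (k + 1), d j f * d (k - j) g) :
    d 1 (1 : A) = 0 := by
  have h := hleib 1 le_rfl hm 1 1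
  rw [mul_one] at h
  simp only [Finset.sum_range_succ, Finset.sum_range_zero, zero_add, hd0, Nat.sub_zero,
    Nat.sub_self, AlgHom.toLinearMap_apply, map_one, one_mul, mul_one] at h
  exact add_eq_left.mp h.symm

lemma pd_exists_good_x (hM : M = RingHom.ker φ) (hm : 1 ≤ m) (hd0 : d 0 = φ.toLinearMap)
    (hleib : ∀ k, 1 ≤ k → k ≤ m → ∀ f g : A,
      d k (f * g) = ∑ j ∈ Finset.range (k + 1), d j f * d (k - j) g)
    (hd1 : d 1 ≠ 0) :
    ∃ x ∈ M, d 1 x = 1 := by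
  obtain ⟨a, ha⟩ : ∃ a, d 1 a ≠ 0 := by
    by_contra h
    push_neg at h
    exact hd1 (LinearMap.ext fun a => by simpa using h a)
  set y : A := a - φ a • (1 : A) with hy
  have hyM : y ∈ M := by
    rw [hM, RingHom.mem_ker]
    simp [hy, Algebra.smul_def]
  have hdy : d 1 y = d 1 a := by
    rw [hy, map_sub, map_smul, pd_d_one_one φ hm hd0 hleib]
    simp
  refine ⟨(d 1 a)⁻¹ • y, M.smul_of_tower_mem _ hyM, ?_⟩
  rw [map_smul, hdy, smul_eq_mul, inv_mul_cancel₀ ha]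

lemma pd_d_pow_x (hM : M = RingHom.ker φ) (hd0 : d 0 = φ.toLinearMap)
    (hleib : ∀ k, 1 ≤ k → k ≤ m → ∀ f g : A,
      d k (f * g) = ∑ j ∈ Finset.range (k + 1), d j f * d (k - j) g)
    (hx : x ∈ M) (hdx : d 1 x = 1) :
    ∀ k, k ≤ m → d k (x ^ k) = 1 := by
  intro k
  induction k with
  | zero => intro _; rw [pow_zero, hd0]; simp
  | succ k IH =>
    intro hkm
    have hkm' : k ≤ m := le_trans (Nat.le_succ k) hkm
    have h : x ^ (k+1) = x * x ^ k := by ring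
    rw [h, hleib (k+1) (Nat.le_add_left 1 k) hkm x (x ^ k)]
    rw [Finset.sum_eq_single 1]
    · rw [hdx, one_mul, Nat.add_sub_cancel]
      exact IH hkm'
    · intro j hj hj1
      rcases Nat.eq_zero_or_pos j with rfl | hjpos
      · have : d 0 x = 0 := by
          rw [hd0]; rw [hM, RingHom.mem_ker] at hx; simpa using hx
        rw [this, zero_mul]
      · have hj2 : 2 ≤ j := by omega
        rw [Finset.mem_range] at hj
        have hsub : k + 1 - j ≤ m := by omega
        have hxk : x ^ k ∈ (M ^ ((k + 1 - j) + 1) : Ideal A) := by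
          have h1 : x ^ k ∈ (M ^ k : Ideal A) := Ideal.pow_mem_pow hx k
          exact Ideal.pow_le_pow_right (by omega) h1
        rw [pd_d_zero_on_pow φ hM hd0 hleib (k + 1 - j) hsub _ hxk, mul_zero]
    · intro h1
      exfalso; exact h1 (Finset.mem_range.mpr (by omega))

lemma pd_forward_chain (hM : M = RingHom.ker φ) (hd0 : d 0 = φ.toLinearMap)
    (hleib : ∀ k, 1 ≤ k → k ≤ m → ∀ f g : A,
      d k (f * g) = ∑ j ∈ Finset.range (k + 1), d j f * d (k - j) g)
    (hcont : ∀ k ≤ m, Continuous (d k))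
    (hx : x ∈ M) (hdx : d 1 x = 1) :
    ∀ k, 1 ≤ k → k ≤ m →
      closure ((M ^ (k + 1) : Ideal A) : Set A) ⊂ closure ((M ^ k : Ideal A) : Set A) := by
  intro k hk1 hkm
  constructor
  · exact closure_mono (fun a ha => Ideal.pow_le_pow_right (Nat.le_succ k) ha)
  · intro hsub
    have hxk : x ^ k ∈ closure ((M ^ (k+1) : Ideal A) : Set A) :=
      hsub (subset_closure (Ideal.pow_mem_pow hx k))
    have hclosed : IsClosed ((d k) ⁻¹' {0} : Set A) :=
      IsClosed.preimage (hcont k hkm) isClosed_singleton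
    have hzero : ((M ^ (k+1) : Ideal A) : Set A) ⊆ (d k) ⁻¹' {0} := by
      intro a ha
      simpa using pd_d_zero_on_pow φ hM hd0 hleib k hkm a ha
    have : d k (x ^ k) = 0 := by
      simpa using hclosed.closure_subset_iff.2 hzero hxk
    rw [pd_d_pow_x φ hM hd0 hleib hx hdx k hkm] at this
    exact one_ne_zero this

lemma pd_pow_sub_clPow {M : Ideal A} (h2 : ∀ y ∈ M, y ∈ clPow M 2) :
    ∀ k, 1 ≤ k → ∀ a ∈ (M ^ k : Ideal A), a ∈ clPow M (k + 1) := by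
  intro k
  induction k with
  | zero => omega
  | succ k IH =>
    intro _ a ha
    rcases Nat.eq_zero_or_pos k with rfl | hk
    · rw [pow_one] at ha; exact h2 a ha
    · rw [pow_succ] at ha
      refine Submodule.mul_induction_on ha (fun f hf g hg => ?_)
        (fun u v hu hv => Submodule.add_mem _ hu hv)
      have hf' : f ∈ clPow M (k + 1) := IH hk f hf
      have hg' : g ∈ clPow M 2 := h2 g hg
      exact pd_clPow_anti M (by omega) (pd_clPow_mul_mem hf' hg')

lemma pd_clPow_le_of_pow_le {M : Ideal A} {j l : ℕ}
    (h : ∀ a ∈ (M ^ j : Ideal A), a ∈ clPow M l) : clPow M j ≤ clPow M l := by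
  intro a ha
  rw [pd_mem_clPow_iff] at ha
  have hcl : IsClosed ((clPow M l : Submodule ℂ A) : Set A) :=
    Submodule.isClosed_topologicalClosure _
  exact hcl.closure_subset_iff.2 (fun y hy => h y hy) ha

lemma pd_exists_x_not_clPow2 {M : Ideal A} {m : ℕ} (hm : 1 ≤ m)
    (hne : closure ((M ^ m : Ideal A) : Set A) ≠ closure ((M ^ (m + 1) : Ideal A) : Set A)) :
    ∃ x, x ∈ M ∧ x ∉ clPow M 2 := by
  by_contra h
  push_neg at h
  have key : clPow M m ≤ clPow M (m + 1) :=
    pd_clPow_le_of_pow_le (fun a ha => pd_pow_sub_clPow h m hm a ha)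
  apply hne
  apply Set.Subset.antisymm
  · intro a ha
    exact pd_mem_clPow_iff.mp (key (pd_mem_clPow_iff.mpr ha))
  · exact closure_mono (fun a ha => Ideal.pow_le_pow_right (Nat.le_succ m) ha)

lemma pd_span_decomp {M : Ideal A}
    (hdim : Module.rank ℂ
      (↥(M.restrictScalars ℂ) ⧸
        Submodule.comap (M.restrictScalars ℂ).subtype (clPow M 2)) ≤ 1)
    {x : A} (hx : x ∈ M) (hx2 : x ∉ clPow M 2) :
    ∀ y ∈ M, ∃ c : ℂ, y - c • x ∈ clPow M 2 := by
  set Mc := M.restrictScalars ℂ with hMc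
  set K := Submodule.comap Mc.subtype (clPow M 2) with hK
  obtain ⟨v₀, hv₀⟩ := rank_le_one_iff.mp hdim
  set xq : Mc ⧸ K := Submodule.Quotient.mk ⟨x, hx⟩ with hxq
  have hxqne : xq ≠ 0 := by
    rw [hxq, Ne, Submodule.Quotient.mk_eq_zero]
    exact fun hc => hx2 hc
  obtain ⟨r, hr⟩ := hv₀ xq
  have hrne : r ≠ 0 := by
    rintro rfl; rw [zero_smul] at hr; exact hxqne hr.symm
  intro y hy
  obtain ⟨s, hs⟩ := hv₀ (Submodule.Quotient.mk ⟨y, hy⟩)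
  refine ⟨s * r⁻¹, ?_⟩
  have key : (Submodule.Quotient.mk (⟨y, hy⟩ : Mc) : Mc ⧸ K)
      = (s * r⁻¹) • xq := by
    rw [← hs, ← hr, smul_smul]
    congr 1
    field_simp
  rw [hxq, ← Submodule.Quotient.mk_smul, Submodule.Quotient.eq] at key
  have : ((⟨y, hy⟩ : Mc) - (s * r⁻¹) • ⟨x, hx⟩ : Mc) ∈ K := key
  rw [hK, Submodule.mem_comap] at this
  simpa using this

lemma pd_pow_decomp {M : Ideal A} {x : A} (hx : x ∈ M)
    (hspan : ∀ y ∈ M, ∃ c : ℂ, y - c • x ∈ clPow M 2) :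
    ∀ k, 1 ≤ k → ∀ a ∈ (M ^ k : Ideal A), ∃ c : ℂ, a - c • x ^ k ∈ clPow M (k + 1) := by
  intro k
  induction k with
  | zero => omega
  | succ k IH =>
    intro _ a ha
    rcases Nat.eq_zero_or_pos k with rfl | hk
    · rw [pow_one] at ha
      simpa using hspan a ha
    · rw [pow_succ] at ha
      refine Submodule.mul_induction_on ha (fun f hf g hg => ?_) (fun u v hu hv => ?_)
      · obtain ⟨c, hc⟩ := IH hk f hf
        obtain ⟨e, he⟩ := hspan g hg
        refine ⟨c * e, ?_⟩
        have hident : f * g - (c * e) • x ^ (k + 1)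
            = (c • x ^ k) * (g - e • x) + (f - c • x ^ k) * g := by
          simp only [Algebra.smul_def, map_mul]
          ring
        rw [hident]
        refine Submodule.add_mem _ ?_ ?_
        · have h1 : (c • x ^ k) ∈ clPow M k :=
            Submodule.smul_mem _ _ (pd_mem_clPow_of_mem (Ideal.pow_mem_pow hx k))
          exact pd_clPow_anti M (by omega) (pd_clPow_mul_mem h1 he)
        · have h2 : g ∈ clPow M 1 := pd_mem_clPow_of_mem (by simpa using hg)
          exact pd_clPow_anti M (by omega) (pd_clPow_mul_mem hc h2)
      · obtain ⟨cu, hcu⟩ := hu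
        obtain ⟨cv, hcv⟩ := hv
        refine ⟨cu + cv, ?_⟩
        have : u + v - (cu + cv) • x ^ (k + 1)
            = (u - cu • x ^ (k + 1)) + (v - cv • x ^ (k + 1)) := by
          rw [add_smul]; ring
        rw [this]
        exact Submodule.add_mem _ hcu hcv

lemma pd_clPow_decomp {M : Ideal A} {x : A} {k : ℕ}
    (hpow : ∀ a ∈ (M ^ k : Ideal A), ∃ c : ℂ, a - c • x ^ k ∈ clPow M (k + 1)) :
    ∀ a ∈ clPow M k, ∃ c : ℂ, a - c • x ^ k ∈ clPow M (k + 1) := by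
  set N := clPow M (k + 1) with hN
  haveI hNc : IsClosed ((N : Submodule ℂ A) : Set A) :=
    Submodule.isClosed_topologicalClosure _
  set W : Submodule ℂ (A ⧸ N) := Submodule.span ℂ {N.mkQ (x ^ k)} with hW
  have hWc : IsClosed (W : Set (A ⧸ N)) := Submodule.closed_of_finiteDimensional W
  have himg : ∀ b ∈ (M ^ k : Ideal A), N.mkQ b ∈ W := by
    intro b hb
    obtain ⟨c, hc⟩ := hpow b hb
    have : N.mkQ b = c • N.mkQ (x ^ k) := by
      rw [← sub_eq_zero, ← map_smul, ← map_sub, Submodule.mkQ_apply,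
        Submodule.Quotient.mk_eq_zero]
      exact hc
    rw [this]
    exact Submodule.smul_mem _ _ (Submodule.mem_span_singleton_self _)
  intro a ha
  rw [pd_mem_clPow_iff] at ha
  have hmem : N.mkQ a ∈ W := by
    have h1 : N.mkQ a ∈ closure (N.mkQ '' ((M ^ k : Ideal A) : Set A)) :=
      (image_closure_subset_closure_image pd_mkQ_continuous) ⟨a, ha, rfl⟩
    refine hWc.closure_subset_iff.2 ?_ h1
    rintro _ ⟨b, hb, rfl⟩
    exact himg b hb
  obtain ⟨c, hc⟩ := Submodule.mem_span_singleton.mp hmem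
  refine ⟨c, ?_⟩
  have : N.mkQ (a - c • x ^ k) = 0 := by
    rw [map_sub, map_smul, ← hc, sub_self]
  rwa [Submodule.mkQ_apply, Submodule.Quotient.mk_eq_zero] at this

lemma pd_xpow_not_mem (hM : M = RingHom.ker φ) (hm : 1 ≤ m)
    (hne : closure ((M ^ m : Ideal A) : Set A) ≠ closure ((M ^ (m + 1) : Ideal A) : Set A))
    (hx : x ∈ M)
    (hdec : ∀ k, 1 ≤ k → ∀ a ∈ clPow M k, ∃ c : ℂ, a - c • x ^ k ∈ clPow M (k + 1)) :
    ∀ k, k ≤ m → x ^ k ∉ clPow M (k + 1) := by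
  have hxm : x ^ m ∉ clPow M (m + 1) := by
    intro hmem
    apply hne
    apply Set.Subset.antisymm
    · intro a ha
      rw [← pd_mem_clPow_iff] at ha
      obtain ⟨c, hc⟩ := hdec m hm a ha
      have : a = (a - c • x ^ m) + c • x ^ m := by ring
      rw [this]
      exact pd_mem_clPow_iff.mp (Submodule.add_mem _ hc (Submodule.smul_mem _ _ hmem))
    · exact closure_mono (fun a ha => Ideal.pow_le_pow_right (Nat.le_succ m) ha)
  intro k hkm hmem
  rcases Nat.eq_zero_or_pos k with rfl | hk
  · have h1 : φ (x ^ 0) = 0 := pd_phi_zero_on_clPow φ hM le_rfl hmem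
    rw [pow_zero, map_one] at h1
    exact one_ne_zero h1
  · apply hxm
    have hxmk : x ^ (m - k) ∈ clPow M (m - k) :=
      pd_mem_clPow_of_mem (Ideal.pow_mem_pow hx _)
    have := pd_clPow_mul_mem hmem hxmk
    rw [← pow_add] at this
    have heq : k + (m - k) = m := by omega
    have heq2 : k + 1 + (m - k) = m + 1 := by omega
    rw [heq] at this
    rw [heq2] at this
    exact this

lemma pd_global_decomp (hM : M = RingHom.ker φ) (hx : x ∈ M)
    (hdec : ∀ k, 1 ≤ k → ∀ a ∈ clPow M k, ∃ c : ℂ, a - c • x ^ k ∈ clPow M (k + 1)) :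
    ∀ a : A, ∃ c : ℕ → ℂ,
      a - ∑ k ∈ Finset.range (m + 1), c k • x ^ k ∈ clPow M (m + 1) := by
  have hstep : ∀ j, j ≤ m → ∀ a ∈ clPow M j, ∃ c : ℂ, a - c • x ^ j ∈ clPow M (j + 1) := by
    intro j hj a ha
    rcases Nat.eq_zero_or_pos j with rfl | hjpos
    · refine ⟨φ a, ?_⟩
      apply pd_mem_clPow_of_mem
      rw [pow_one]
      rw [hM, RingHom.mem_ker]
      simp [Algebra.smul_def]
    · exact hdec j hjpos a ha
  have key : ∀ n j, j + n = m + 1 → ∀ a ∈ clPow M j,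
      ∃ c : ℕ → ℂ, a - ∑ k ∈ Finset.Ico j (m + 1), c k • x ^ k ∈ clPow M (m + 1) := by
    intro n
    induction n with
    | zero =>
      intro j hj a ha
      refine ⟨0, ?_⟩
      have : j = m + 1 := by omega
      subst this
      simp only [Finset.Ico_self, Finset.sum_empty, sub_zero]
      exact ha
    | succ n IH =>
      intro j hj a ha
      have hjm : j ≤ m := by omega
      obtain ⟨cj, hcj⟩ := hstep j hjm a ha
      obtain ⟨c', hc'⟩ := IH (j + 1) (by omega) _ hcj
      refine ⟨Function.update c' j cj, ?_⟩
      rw [← (show insert j (Finset.Ico (j + 1) (m + 1)) = Finset.Ico j (m + 1) from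
          Finset.insert_Ico_succ_left_eq_Ico (by omega)),
        Finset.sum_insert (by simp)]
      have hsum : ∑ k ∈ Finset.Ico (j + 1) (m + 1), Function.update c' j cj k • x ^ k
          = ∑ k ∈ Finset.Ico (j + 1) (m + 1), c' k • x ^ k := by
        apply Finset.sum_congr rfl
        intro k hk
        rw [Function.update_of_ne (by rw [Finset.mem_Ico] at hk; omega)]
      rw [hsum, Function.update_self]
      have : a - (cj • x ^ j + ∑ k ∈ Finset.Ico (j + 1) (m + 1), c' k • x ^ k)
          = (a - cj • x ^ j) - ∑ k ∈ Finset.Ico (j + 1) (m + 1), c' k • x ^ k := by ring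
      rw [this]
      exact hc'
  intro a
  have ha0 : a ∈ clPow M 0 := by
    apply pd_mem_clPow_of_mem
    simp [Ideal.one_eq_top]
  obtain ⟨c, hc⟩ := key (m + 1) 0 (by omega) a ha0
  refine ⟨c, ?_⟩
  rwa [Finset.range_eq_Ico]

lemma pd_exists_nbpd (φ : A →ₐ[ℂ] ℂ) {M : Ideal A} {m : ℕ} {x : A}
    (hM : M = RingHom.ker φ) (hm : 1 ≤ m) (hx : x ∈ M)
    (hnot : ∀ k, k ≤ m → x ^ k ∉ clPow M (k + 1))
    (hglob : ∀ a : A, ∃ c : ℕ → ℂ,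
      a - ∑ k ∈ Finset.range (m + 1), c k • x ^ k ∈ clPow M (m + 1)) :
    HasNBPDAlg φ m := by
  classical
  set N := clPow M (m + 1) with hN
  haveI hNc : IsClosed ((N : Submodule ℂ A) : Set A) :=
    Submodule.isClosed_topologicalClosure _
  set b : Fin (m + 1) → A ⧸ N := fun i => N.mkQ (x ^ (i : ℕ)) with hb
  -- membership in N from quotient equality
  have hmkS : ∀ γ : ℕ → ℂ,
      N.mkQ (∑ k ∈ Finset.range (m + 1), γ k • x ^ k)
        = ∑ i : Fin (m + 1), γ (i : ℕ) • b i := by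
    intro γ
    rw [map_sum]
    rw [← Fin.sum_univ_eq_sum_range (fun k => N.mkQ (γ k • x ^ k)) (m + 1)]
    exact Finset.sum_congr rfl (fun i _ => by rw [map_smul, hb])
  -- linear independence
  have hli : LinearIndependent ℂ b := by
    rw [Fintype.linearIndependent_iff]
    intro g hg
    have hS : (∑ k ∈ Finset.range (m + 1), (fun k : ℕ =>
        if h : k < m + 1 then g ⟨k, h⟩ else 0) k • x ^ k) ∈ N := by
      rw [← Submodule.Quotient.mk_eq_zero, ← Submodule.mkQ_apply, hmkS]
      rw [← hg]
      exact Finset.sum_congr rfl (fun i _ => by simp [Fin.is_lt]; intro h; exact absurd i.isLt (by omega))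
    set γ : ℕ → ℂ := fun k => if h : k < m + 1 then g ⟨k, h⟩ else 0 with hγ
    have hzero : ∀ k, k ≤ m → γ k = 0 := by
      intro k
      induction k using Nat.strong_induction_on with
      | _ k IH =>
        intro hkm
        by_contra hgk
        apply hnot k hkm
        have hmem : γ k • x ^ k ∈ clPow M (k + 1) := by
          have hsplit := Finset.add_sum_erase (Finset.range (m + 1))
            (fun j => γ j • x ^ j) (Finset.mem_range.mpr (by omega : k < m + 1))
          have hrest : γ k • x ^ k = (∑ j ∈ Finset.range (m + 1), γ j • x ^ j)
              - ∑ j ∈ (Finset.range (m + 1)).erase k, γ j • x ^ j := by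
            rw [← hsplit]; ring
          rw [hrest]
          refine Submodule.sub_mem _ (pd_clPow_anti M (by omega) hS) ?_
          refine Submodule.sum_mem _ (fun j hj => ?_)
          rw [Finset.mem_erase, Finset.mem_range] at hj
          rcases lt_or_gt_of_ne hj.1 with hjk | hjk
          · rw [IH j hjk (by omega), zero_smul]
            exact Submodule.zero_mem _
          · exact Submodule.smul_mem _ _
              (pd_clPow_anti M hjk (pd_mem_clPow_of_mem (Ideal.pow_mem_pow hx j)))
        have : x ^ k = (γ k)⁻¹ • (γ k • x ^ k) := by
          rw [smul_smul, inv_mul_cancel₀ hgk, one_smul]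
        rw [this]
        exact Submodule.smul_mem _ _ hmem
    intro i
    have := hzero (i : ℕ) (by omega)
    simp only [hγ, dif_pos i.isLt, Fin.eta] at this
    exact this
  -- spanning
  have hsp : ⊤ ≤ Submodule.span ℂ (Set.range b) := by
    intro v _
    obtain ⟨a, rfl⟩ := Submodule.mkQ_surjective N v
    obtain ⟨c, hc⟩ := hglob a
    have : N.mkQ a = ∑ i : Fin (m + 1), c (i : ℕ) • b i := by
      rw [← hmkS c, ← sub_eq_zero, ← map_sub, Submodule.mkQ_apply,
        Submodule.Quotient.mk_eq_zero]
      exact hc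
    rw [this]
    exact Submodule.sum_mem _ (fun i _ =>
      Submodule.smul_mem _ _ (Submodule.subset_span ⟨i, rfl⟩))
  set B : Module.Basis (Fin (m + 1)) ℂ (A ⧸ N) := Module.Basis.mk hli hsp with hB
  haveI : FiniteDimensional ℂ (A ⧸ N) := Module.Basis.finiteDimensional_of_finite B
  set d : ℕ → (A →ₗ[ℂ] ℂ) := fun k =>
    if h : k < m + 1 then (B.coord ⟨k, h⟩).comp N.mkQ else 0 with hd
  -- evaluation lemma
  have heval : ∀ (a : A) (γ : ℕ → ℂ),
      a - ∑ k ∈ Finset.range (m + 1), γ k • x ^ k ∈ N →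
      ∀ k, k ≤ m → d k a = γ k := by
    intro a γ hmem k hk
    have hmk : N.mkQ a = ∑ i : Fin (m + 1), γ (i : ℕ) • B i := by
      have h1 : N.mkQ a = ∑ i : Fin (m + 1), γ (i : ℕ) • b i := by
        rw [← hmkS γ, ← sub_eq_zero, ← map_sub, Submodule.mkQ_apply,
          Submodule.Quotient.mk_eq_zero]
        exact hmem
      rw [h1]
      exact Finset.sum_congr rfl (fun i _ => by rw [hB, Module.Basis.mk_apply])
    have hklt : k < m + 1 := by omega
    rw [hd]
    simp only [dif_pos hklt, LinearMap.comp_apply, Module.Basis.coord_apply, hmk,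
      map_sum, map_smul, Module.Basis.repr_self]
    rw [Finset.sum_eq_single (⟨k, hklt⟩ : Fin (m + 1))]
    · simp
    · intro i _ hik
      simp [Finsupp.single_apply, hik]
    · intro h; exact absurd (Finset.mem_univ _) h
  -- canonical decomposition using d itself
  have hself : ∀ a : A,
      a - ∑ k ∈ Finset.range (m + 1), d k a • x ^ k ∈ N := by
    intro a
    obtain ⟨γ, hγ⟩ := hglob a
    have : ∑ k ∈ Finset.range (m + 1), d k a • x ^ k
        = ∑ k ∈ Finset.range (m + 1), γ k • x ^ k := by
      refine Finset.sum_congr rfl (fun k hk => ?_)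
      rw [Finset.mem_range] at hk
      rw [heval a γ hγ k (by omega)]
    rw [this]
    exact hγ
  refine ⟨d, ?_, ?_, ?_, ?_⟩
  · -- d 0 = φ
    apply LinearMap.ext
    intro a
    obtain ⟨γ, hγ⟩ := hglob a
    have h0 : d 0 a = γ 0 := heval a γ hγ 0 (by omega)
    have hφx : φ x = 0 := by rw [hM, RingHom.mem_ker] at hx; exact hx
    have hφN : φ (a - ∑ k ∈ Finset.range (m + 1), γ k • x ^ k) = 0 :=
      pd_phi_zero_on_clPow φ hM (by omega : 1 ≤ m + 1) (hN ▸ hγ)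
    have hφa : φ a = γ 0 := by
      rw [map_sub] at hφN
      have hs : φ (∑ k ∈ Finset.range (m + 1), γ k • x ^ k) = γ 0 := by
        rw [map_sum]
        rw [Finset.sum_eq_single 0]
        · simp
        · intro k _ hk0
          simp [map_smul, map_pow, hφx, zero_pow hk0]
        · intro h; exact absurd (Finset.mem_range.mpr (by omega)) h
      rw [hs] at hφN
      exact sub_eq_zero.mp hφN
    rw [h0, AlgHom.toLinearMap_apply, hφa]
  · -- Leibniz
    intro k hk1 hkm f g
    set P := ∑ j ∈ Finset.range (m + 1), d j f • x ^ j with hP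
    set Q := ∑ j ∈ Finset.range (m + 1), d j g • x ^ j with hQ
    have hfP : f - P ∈ N := hself f
    have hgQ : g - Q ∈ N := hself g
    set γ : ℕ → ℂ := fun k' => ∑ j ∈ Finset.range (k' + 1), d j f * d (k' - j) g with hγdef
    have hdecomp : f * g - ∑ k' ∈ Finset.range (m + 1), γ k' • x ^ k' ∈ N := by
      have hid : f * g - ∑ k' ∈ Finset.range (m + 1), γ k' • x ^ k'
          = g * (f - P) + P * (g - Q)
            + (P * Q - ∑ k' ∈ Finset.range (m + 1), γ k' • x ^ k') := by ring
      rw [hid]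
      refine Submodule.add_mem _ (Submodule.add_mem _ ?_ ?_) ?_
      · exact pd_mul_mem_clPow g hfP
      · exact pd_mul_mem_clPow P hgQ
      · have hPQ : P * Q = ∑ p ∈ Finset.range (m + 1) ×ˢ Finset.range (m + 1),
            (d p.1 f * d p.2 g) • x ^ (p.1 + p.2) := by
          rw [hP, hQ, Finset.sum_mul_sum, Finset.sum_product]
          refine Finset.sum_congr rfl (fun j _ => Finset.sum_congr rfl (fun l _ => ?_))
          rw [smul_mul_smul_comm, pow_add]
        have hγsum : ∑ k' ∈ Finset.range (m + 1), γ k' • x ^ k'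
            = ∑ p ∈ (Finset.range (m + 1) ×ˢ Finset.range (m + 1)).filter
                (fun p => p.1 + p.2 ≤ m), (d p.1 f * d p.2 g) • x ^ (p.1 + p.2) := by
          calc ∑ k' ∈ Finset.range (m + 1), γ k' • x ^ k'
              = ∑ k' ∈ Finset.range (m + 1), ∑ j ∈ Finset.range (k' + 1),
                  (d j f * d (k' - j) g) • x ^ k' := by
                refine Finset.sum_congr rfl (fun k' _ => ?_)
                rw [hγdef, Finset.sum_smul]
            _ = ∑ p ∈ (Finset.range (m + 1)).sigma (fun k' => Finset.range (k' + 1)),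
                  (d p.2 f * d (p.1 - p.2) g) • x ^ p.1 := by
                rw [Finset.sum_sigma']
            _ = _ := by
                refine Finset.sum_nbij' (fun p => (p.2, p.1 - p.2))
                  (fun p => ⟨p.1 + p.2, p.1⟩) ?_ ?_ ?_ ?_ ?_
                · intro p hp
                  simp only [Finset.mem_sigma, Finset.mem_range] at hp
                  simp only [Finset.mem_filter, Finset.mem_product, Finset.mem_range]
                  omega
                · intro p hp
                  simp only [Finset.mem_filter, Finset.mem_product, Finset.mem_range] at hp
                  simp only [Finset.mem_sigma, Finset.mem_range]
                  omega
                · rintro ⟨k', j⟩ hp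
                  simp only [Finset.mem_sigma, Finset.mem_range] at hp
                  have h1 : j + (k' - j) = k' := by omega
                  simp [h1]
                · intro p hp
                  simp only [Finset.mem_filter, Finset.mem_product, Finset.mem_range] at hp
                  have h1 : p.1 + p.2 - p.1 = p.2 := by omega
                  simp [Prod.ext_iff, h1]
                · intro p hp
                  simp only [Finset.mem_sigma, Finset.mem_range] at hp
                  have h1 : p.2 + (p.1 - p.2) = p.1 := by omega
                  rw [h1]
        rw [hPQ, hγsum]
        rw [← Finset.sum_filter_add_sum_filter_not
          (Finset.range (m + 1) ×ˢ Finset.range (m + 1)) (fun p => p.1 + p.2 ≤ m)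
          (fun p => (d p.1 f * d p.2 g) • x ^ (p.1 + p.2))]
        rw [add_sub_cancel_left]
        refine Submodule.sum_mem _ (fun p hp => ?_)
        rw [Finset.mem_filter] at hp
        refine Submodule.smul_mem _ _ ?_
        exact pd_clPow_anti M (by omega) (pd_mem_clPow_of_mem (Ideal.pow_mem_pow hx _))
    exact heval (f * g) γ hdecomp k hkm
  · -- continuity
    intro k hkm
    have hklt : k < m + 1 := by omega
    have : d k = (B.coord ⟨k, hklt⟩).comp N.mkQ := by rw [hd]; simp [dif_pos hklt, hkm]
    rw [this]
    rw [LinearMap.coe_comp]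
    exact ((B.coord ⟨k, hklt⟩).continuous_of_finiteDimensional).comp pd_mkQ_continuous
  · -- nondegeneracy
    have hdx : d 1 x = 1 := by
      apply heval x (fun k => if k = 1 then 1 else 0) _ 1 hm
      have : ∑ k ∈ Finset.range (m + 1), (if k = 1 then (1:ℂ) else 0) • x ^ k = x := by
        rw [Finset.sum_eq_single 1]
        · simp
        · intro k _ hk1
          rw [if_neg hk1, zero_smul]
        · intro h
          exact absurd (Finset.mem_range.mpr (by omega)) h
      rw [this, sub_self]
      exact Submodule.zero_mem _
    intro h
    rw [h] at hdx
    simp at hdx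

end PDAux

/-- Lemma 2.6: for `M = ker φ` with `dim(M/cl M²) ≤ 1`, there is a nondegenerate
bounded point derivation of order `m` at `φ` iff `cl(M^m) ≠ cl(M^{m+1})`, in which case
the chain `M ⊋ cl(M²) ⊋ ⋯ ⊋ cl(M^{m+1})` of closed powers is strictly decreasing. -/
theorem derivations_vs_ideal_powers {A : Type*} [NormedCommRing A]
    [NormedAlgebra ℂ A] [CompleteSpace A]
    (φ : A →ₐ[ℂ] ℂ) (M : Ideal A) (hM : M = RingHom.ker φ)
    (m : ℕ) (hm : 1 ≤ m)
    (hdim : Module.rank ℂ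
      (↥(M.restrictScalars ℂ) ⧸
        Submodule.comap (M.restrictScalars ℂ).subtype (clPow M 2)) ≤ 1) :
    (HasNBPDAlg φ m ↔
      closure ((M ^ m : Ideal A) : Set A) ≠ closure ((M ^ (m + 1) : Ideal A) : Set A)) ∧
    (HasNBPDAlg φ m → ∀ k : ℕ, 1 ≤ k → k ≤ m →
      closure ((M ^ (k + 1) : Ideal A) : Set A)
        ⊂ closure ((M ^ k : Ideal A) : Set A)) := by
  constructor
  · constructor
    · rintro ⟨d, hd0, hleib, hcont, hd1⟩
      obtain ⟨x, hx, hdx⟩ := pd_exists_good_x φ hM hm hd0 hleib hd1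
      have hchain := pd_forward_chain φ hM hd0 hleib hcont hx hdx m hm le_rfl
      intro heq
      exact hchain.2 (by rw [heq])
    · intro hne
      obtain ⟨x, hx, hx2⟩ := pd_exists_x_not_clPow2 hm hne
      have hspan := pd_span_decomp hdim hx hx2
      have hdec : ∀ k, 1 ≤ k → ∀ a ∈ clPow M k,
          ∃ c : ℂ, a - c • x ^ k ∈ clPow M (k + 1) :=
        fun k hk => pd_clPow_decomp (pd_pow_decomp hx hspan k hk)
      have hnot := pd_xpow_not_mem φ hM hm hne hx hdec
      have hglob := pd_global_decomp (m := m) φ hM hx hdec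
      exact pd_exists_nbpd φ hM hm hx hnot hglob
  · rintro ⟨d, hd0, hleib, hcont, hd1⟩
    obtain ⟨x, hx, hdx⟩ := pd_exists_good_x φ hM hm hd0 hleib hd1
    exact pd_forward_chain φ hM hd0 hleib hcont hx hdx

end
end

section
/- Let K be a compact plane set, let a ∈ K, and let m ∈ ℕ. Then the following are equivalent: (i) there exists a nondegenerate bounded point derivation of order m on R(K) at a; (ii) M_a ⊋ cl(M_a²) ⊋ ⋯ ⊋ cl(M_a^{m+1}) in R(K); (iii) the function (z−a)^m does not belong to the closure in R(K) of the set {(z−a)^{m+1}·g : g ∈ R₀(K)}. -/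
open scoped ENNReal
open Metric Set Filter

noncomputable section

-- ===================== auxiliary infrastructure =====================

open Polynomial in
/-- restriction of a polynomial to `K`. -/
def pMap (K : Set ℂ) (p : Polynomial ℂ) : C(K, ℂ) :=
  ⟨fun z => p.eval (z : ℂ), (p.continuous_aeval).comp continuous_subtype_val⟩

section Infra
open Polynomial
variable {K : Set ℂ} {a : ℂ}

@[simp] lemma pMap_apply (p : Polynomial ℂ) (z : K) : pMap K p z = p.eval (z : ℂ) := rfl

lemma pMap_mem_R0 (p : Polynomial ℂ) : pMap K p ∈ R0 K :=
  ⟨p, 1, fun _ _ => by simp, fun z => by simp⟩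

lemma R0_mul {f g : C(K, ℂ)} (hf : f ∈ R0 K) (hg : g ∈ R0 K) : f * g ∈ R0 K := by
  obtain ⟨p1, q1, hq1, h1⟩ := hf
  obtain ⟨p2, q2, hq2, h2⟩ := hg
  refine ⟨p1 * p2, q1 * q2, fun z hz => by simp [hq1 z hz, hq2 z hz], fun z => ?_⟩
  simp only [ContinuousMap.mul_apply, h1 z, h2 z, eval_mul]
  ring

lemma R0_add {f g : C(K, ℂ)} (hf : f ∈ R0 K) (hg : g ∈ R0 K) : f + g ∈ R0 K := by
  obtain ⟨p1, q1, hq1, h1⟩ := hf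
  obtain ⟨p2, q2, hq2, h2⟩ := hg
  refine ⟨p1 * q2 + p2 * q1, q1 * q2, fun z hz => by simp [hq1 z hz, hq2 z hz], fun z => ?_⟩
  simp only [ContinuousMap.add_apply, h1 z, h2 z, eval_mul, eval_add]
  rw [div_add_div _ _ (hq1 z z.2) (hq2 z z.2)]
  ring_nf

lemma R0_smul (c : ℂ) {f : C(K, ℂ)} (hf : f ∈ R0 K) : c • f ∈ R0 K := by
  obtain ⟨p1, q1, hq1, h1⟩ := hf
  refine ⟨Polynomial.C c * p1, q1, hq1, fun z => ?_⟩
  simp only [ContinuousMap.smul_apply, h1 z, eval_mul, eval_C, smul_eq_mul]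
  ring

lemma R0_zero : (0 : C(K, ℂ)) ∈ R0 K := ⟨0, 1, fun _ _ => by simp, fun z => by simp⟩

lemma R0_one : (1 : C(K, ℂ)) ∈ R0 K := ⟨1, 1, fun _ _ => by simp, fun z => by simp⟩

lemma R0_subset_RK : R0 K ⊆ RK K := subset_closure

lemma pMap_mem_RK (p : Polynomial ℂ) : pMap K p ∈ RK K := R0_subset_RK (pMap_mem_R0 p)

lemma RK_one : (1 : C(K, ℂ)) ∈ RK K := R0_subset_RK R0_one

lemma RK_zero : (0 : C(K, ℂ)) ∈ RK K := R0_subset_RK R0_zero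

lemma RK_isClosed : IsClosed (RK K) := isClosed_closure

@[simp] lemma zamMap_apply (n : ℕ) (z : K) : zamMap K a n z = ((z : ℂ) - a) ^ n := rfl

lemma zamMap_mem_R0 (n : ℕ) : zamMap K a n ∈ R0 K :=
  ⟨(X - Polynomial.C a) ^ n, 1, fun _ _ => by simp, fun z => by simp⟩

lemma zamMap_mem_RK (n : ℕ) : zamMap K a n ∈ RK K := R0_subset_RK (zamMap_mem_R0 n)

lemma zamMap_mul (i j : ℕ) : zamMap K a i * zamMap K a j = zamMap K a (i + j) := by
  ext z; simp [pow_add]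

lemma prod_zamMap_one (k : ℕ) : (∏ _j : Fin k, zamMap K a 1) = zamMap K a k := by
  ext z; simp [ContinuousMap.prod_apply]

lemma pMap_add (p q : Polynomial ℂ) : pMap K (p + q) = pMap K p + pMap K q := by ext z; simp
lemma pMap_mul (p q : Polynomial ℂ) : pMap K (p * q) = pMap K p * pMap K q := by ext z; simp
lemma pMap_C (c : ℂ) : pMap K (Polynomial.C c) = c • (1 : C(K, ℂ)) := by ext z; simp
lemma pMap_X (a : ℂ) : pMap K (X : Polynomial ℂ) = zamMap K a 1 + a • (1 : C(K, ℂ)) := by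
  ext z; simp

lemma smulone_mem_RK (c : ℂ) : c • (1 : C(K, ℂ)) ∈ RK K := by
  have := pMap_mem_RK (K := K) (Polynomial.C c)
  rwa [pMap_C] at this

variable [CompactSpace K]

/-- `R0` as a subalgebra. -/
def R0sub (K : Set ℂ) [CompactSpace K] : Subalgebra ℂ C(K, ℂ) where
  carrier := R0 K
  mul_mem' := R0_mul
  add_mem' := R0_add
  algebraMap_mem' := fun c => ⟨Polynomial.C c, 1, fun _ _ => by simp, fun z => by simp⟩

def RKsub (K : Set ℂ) [CompactSpace K] : Subalgebra ℂ C(K, ℂ) := (R0sub K).topologicalClosure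

lemma mem_RKsub_iff {f : C(K, ℂ)} : f ∈ RKsub K ↔ f ∈ RK K := by
  have : (RKsub K : Set C(K, ℂ)) = RK K := Subalgebra.topologicalClosure_coe _
  rw [← this]; rfl

lemma RK_mul {f g : C(K, ℂ)} (hf : f ∈ RK K) (hg : g ∈ RK K) : f * g ∈ RK K :=
  mem_RKsub_iff.mp (mul_mem (mem_RKsub_iff.mpr hf) (mem_RKsub_iff.mpr hg))

lemma RK_add {f g : C(K, ℂ)} (hf : f ∈ RK K) (hg : g ∈ RK K) : f + g ∈ RK K :=
  mem_RKsub_iff.mp (add_mem (mem_RKsub_iff.mpr hf) (mem_RKsub_iff.mpr hg))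

lemma RK_smul (c : ℂ) {f : C(K, ℂ)} (hf : f ∈ RK K) : c • f ∈ RK K :=
  mem_RKsub_iff.mp (Subalgebra.smul_mem _ (mem_RKsub_iff.mpr hf) c)

lemma RK_prod {n : ℕ} {g : Fin n → C(K, ℂ)} (hg : ∀ j, g j ∈ RK K) : (∏ j, g j) ∈ RK K :=
  mem_RKsub_iff.mp (prod_mem fun j _ => mem_RKsub_iff.mpr (hg j))

lemma RK_sum {n : ℕ} {g : Fin n → C(K, ℂ)} (hg : ∀ j, g j ∈ RK K) : (∑ j, g j) ∈ RK K :=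
  mem_RKsub_iff.mp (sum_mem fun j _ => mem_RKsub_iff.mpr (hg j))

end Infra

section ClosureHelpers
variable {α β : Type*} [TopologicalSpace α] [TopologicalSpace β]

lemma subtype_mem_closure {T S : Set α} (hST : S ⊆ T) {x : {a // a ∈ T}}
    (hx : (x : α) ∈ closure S) : x ∈ closure {y : {a // a ∈ T} | (y : α) ∈ S} := by
  rw [closure_subtype]
  have : (Subtype.val '' {y : {a // a ∈ T} | (y : α) ∈ S}) = S := by
    ext z
    constructor
    · rintro ⟨y, hy, rfl⟩; exact hy
    · intro hz; exact ⟨⟨z, hST hz⟩, hz, rfl⟩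
  rwa [this]

lemma eqOn_closure_subtype [T2Space β] {T S : Set α} (hST : S ⊆ T) {F G : {a // a ∈ T} → β}
    (hF : Continuous F) (hG : Continuous G) (h : ∀ x : {a // a ∈ T}, (x : α) ∈ S → F x = G x)
    {x : {a // a ∈ T}} (hx : (x : α) ∈ closure S) : F x = G x := by
  have hA : IsClosed {y : {a // a ∈ T} | F y = G y} := isClosed_eq hF hG
  have hsub : closure {y : {a // a ∈ T} | (y : α) ∈ S} ⊆ {y | F y = G y} :=
    hA.closure_subset_iff.mpr h
  exact hsub (subtype_mem_closure hST hx)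

lemma eqOn_closure_subtype2 [T2Space β] {T S : Set α} (hST : S ⊆ T)
    {F G : {a // a ∈ T} × {a // a ∈ T} → β}
    (hF : Continuous F) (hG : Continuous G)
    (h : ∀ x y : {a // a ∈ T}, (x : α) ∈ S → (y : α) ∈ S → F (x, y) = G (x, y))
    {x y : {a // a ∈ T}} (hx : (x : α) ∈ closure S) (hy : (y : α) ∈ closure S) :
    F (x, y) = G (x, y) := by
  have hA : IsClosed {p : {a // a ∈ T} × {a // a ∈ T} | F p = G p} := isClosed_eq hF hG
  have hsub : ({y : {a // a ∈ T} | (y : α) ∈ S} ×ˢ {y : {a // a ∈ T} | (y : α) ∈ S}) ⊆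
      {p | F p = G p} := fun p hp => h p.1 p.2 hp.1 hp.2
  have hcl : closure ({y : {a // a ∈ T} | (y : α) ∈ S} ×ˢ {y : {a // a ∈ T} | (y : α) ∈ S})
      ⊆ {p | F p = G p} := hA.closure_subset_iff.mpr hsub
  apply hcl
  rw [closure_prod_eq]
  exact ⟨subtype_mem_closure hST hx, subtype_mem_closure hST hy⟩

end ClosureHelpers

section SeqClosure
variable {E : Type*} [TopologicalSpace E] [FrechetUrysohnSpace E]

lemma closure_add_mem [AddMonoid E] [ContinuousAdd E] {S : Set E}
    (hadd : ∀ x ∈ S, ∀ y ∈ S, x + y ∈ S) {x y : E}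
    (hx : x ∈ closure S) (hy : y ∈ closure S) : x + y ∈ closure S := by
  rw [mem_closure_iff_seq_limit] at hx hy ⊢
  obtain ⟨u, hu, hux⟩ := hx
  obtain ⟨v, hv, hvy⟩ := hy
  exact ⟨fun n => u n + v n, fun n => hadd _ (hu n) _ (hv n), hux.add hvy⟩

lemma closure_mul_right_mem [Monoid E] [ContinuousMul E] {S T : Set E} {c : E}
    (h : ∀ y ∈ S, y * c ∈ T) {x : E} (hx : x ∈ closure S) : x * c ∈ closure T := by
  rw [mem_closure_iff_seq_limit] at hx ⊢
  obtain ⟨u, hu, hux⟩ := hx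
  exact ⟨fun n => u n * c, fun n => h _ (hu n), hux.mul tendsto_const_nhds⟩

lemma closure_prod_mem [CommMonoid E] [ContinuousMul E] {n : ℕ} {S : Set E}
    {g : Fin n → E} (hg : ∀ j, g j ∈ closure S)
    {T : Set E} (hT : ∀ h : Fin n → E, (∀ j, h j ∈ S) → (∏ j, h j) ∈ T) :
    (∏ j, g j) ∈ closure T := by
  have hex : ∀ j, ∃ u : ℕ → E, (∀ i, u i ∈ S) ∧ Filter.Tendsto u Filter.atTop (nhds (g j)) :=
    fun j => mem_closure_iff_seq_limit.mp (hg j)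
  choose u hu hul using hex
  rw [mem_closure_iff_seq_limit]
  refine ⟨fun i => ∏ j, u j i, fun i => hT _ (fun j => hu j i), ?_⟩
  exact tendsto_finset_prod _ (fun j _ => hul j)

end SeqClosure

section IdealPowLemmas
variable {K : Set ℂ} {S : Set C(K, ℂ)}

lemma idealPow_zero_mem (m : ℕ) : (0 : C(K, ℂ)) ∈ idealPow S m :=
  ⟨0, fun i _ => absurd i.2 (by simp), fun i => absurd i.2 (by simp), by simp⟩

lemma idealPow_add_mem {m : ℕ} {f g : C(K, ℂ)} (hf : f ∈ idealPow S m)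
    (hg : g ∈ idealPow S m) : f + g ∈ idealPow S m := by
  obtain ⟨n1, g1, hg1, rfl⟩ := hf
  obtain ⟨n2, g2, hg2, rfl⟩ := hg
  refine ⟨n1 + n2, fun i => Fin.addCases (fun i1 => g1 i1) (fun i2 => g2 i2) i, ?_, ?_⟩
  · intro i j
    refine Fin.addCases (fun i1 => ?_) (fun i2 => ?_) i
    · simp only [Fin.addCases_left]; exact hg1 i1 j
    · simp only [Fin.addCases_right]; exact hg2 i2 j
  · rw [Fin.sum_univ_add]
    congr 1
    · exact Finset.sum_congr rfl fun i _ => by simp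
    · exact Finset.sum_congr rfl fun i _ => by simp

lemma prod_mem_idealPow {m : ℕ} {g : Fin m → C(K, ℂ)} (hg : ∀ j, g j ∈ S) :
    (∏ j, g j) ∈ idealPow S m :=
  ⟨1, fun _ => g, fun _ j => hg j, by simp⟩

lemma idealPow_succ_subset (hmul : ∀ f ∈ S, ∀ g ∈ S, f * g ∈ S) {k : ℕ} (hk : 1 ≤ k) :
    idealPow S (k + 1) ⊆ idealPow S k := by
  obtain ⟨k', rfl⟩ : ∃ k', k = k' + 1 := ⟨k - 1, by omega⟩
  rintro f ⟨n, g, hgS, rfl⟩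
  refine ⟨n, fun i => Fin.cons (g i 0 * g i 1) (fun j => g i j.succ.succ), ?_, ?_⟩
  · intro i j
    refine Fin.cases ?_ (fun j' => ?_) j
    · simpa using hmul _ (hgS i 0) _ (hgS i 1)
    · simpa using hgS i j'.succ.succ
  · refine Finset.sum_congr rfl fun i _ => ?_
    rw [Fin.prod_univ_succ (f := g i), Fin.prod_univ_succ (f := fun j : Fin (k' + 1) => g i j.succ),
      Fin.prod_cons, mul_assoc, Fin.succ_zero_eq_one]

variable {a : ℂ} [CompactSpace K]

lemma Mx_mul {f g : C(K, ℂ)} (hf : f ∈ Mx K a) (hg : g ∈ Mx K a) : f * g ∈ Mx K a :=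
  ⟨RK_mul hf.1 hg.1, fun h => by simp [hf.2 h, hg.2 h]⟩

lemma Mx_subset_RK : Mx K a ⊆ RK K := fun _ hf => hf.1

lemma zamMap_one_mem_Mx : zamMap K a 1 ∈ Mx K a := ⟨zamMap_mem_RK 1, fun h => by simp⟩

lemma zamMap_mem_idealPow (k : ℕ) : zamMap K a k ∈ idealPow (Mx K a) k := by
  have := prod_mem_idealPow (g := fun _j : Fin k => zamMap K a 1)
    (fun _ => zamMap_one_mem_Mx (a := a))
  rwa [prod_zamMap_one] at this

lemma idealPow_subset_RK {m : ℕ} : idealPow (Mx K a) m ⊆ RK K := by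
  rintro f ⟨n, g, hgS, rfl⟩
  exact RK_sum fun i => RK_prod fun j => (hgS i j).1

end IdealPowLemmas

section DerivLemmas
variable {K : Set ℂ} {a : ℂ} {m : ℕ} {d : ℕ → C(K, ℂ) → ℂ} [CompactSpace K]
variable (hd : IsPDOrder K a m d) (hm : 1 ≤ m) (ha : a ∈ K)
include hd hm ha

lemma d1_leibniz' {f g : C(K, ℂ)} (hf : f ∈ RK K) (hg : g ∈ RK K) :
    d 1 (f * g) = f ⟨a, ha⟩ * d 1 g + d 1 f * g ⟨a, ha⟩ := by
  have h := hd.2.2.2 1 le_rfl hm f hf g hg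
  simp only [Finset.sum_range_succ, Finset.sum_range_zero] at h
  norm_num at h
  rw [h, hd.1 f hf ha, hd.1 g hg ha]

lemma d1_one : d 1 (1 : C(K, ℂ)) = 0 := by
  have h1 : (1 : C(K, ℂ)) ∈ RK K := RK_one
  have h := d1_leibniz' hd hm ha h1 h1
  simp only [mul_one, ContinuousMap.one_apply, one_mul] at h
  linear_combination -h

lemma d1_pMap_zero (hc : d 1 (zamMap K a 1) = 0) (p : Polynomial ℂ) : d 1 (pMap K p) = 0 := by
  have hsmul : ∀ (c : ℂ) (f : C(K, ℂ)), f ∈ RK K → d 1 (c • f) = c * d 1 f :=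
    fun c f hf => hd.2.2.1 1 hm c f hf
  have hadd : ∀ (f g : C(K, ℂ)), f ∈ RK K → g ∈ RK K → d 1 (f + g) = d 1 f + d 1 g :=
    fun f g hf hg => hd.2.1 1 hm f hf g hg
  have hX : d 1 (pMap K (Polynomial.X : Polynomial ℂ)) = 0 := by
    rw [pMap_X a, hadd _ _ (zamMap_mem_RK 1) (smulone_mem_RK a), hc,
      hsmul a 1 RK_one, d1_one hd hm ha]
    ring
  induction p using Polynomial.induction_on with
  | C c => rw [pMap_C, hsmul c 1 RK_one, d1_one hd hm ha]; ring
  | add p q hp hq => rw [pMap_add, hadd _ _ (pMap_mem_RK p) (pMap_mem_RK q), hp, hq]; ring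
  | monomial n c hn =>
      have hmono : Polynomial.C c * Polynomial.X ^ (n + 1)
          = (Polynomial.C c * Polynomial.X ^ n) * Polynomial.X := by ring
      rw [hmono, pMap_mul, d1_leibniz' hd hm ha (pMap_mem_RK _) (pMap_mem_RK _), hn, hX]
      ring

lemma d1_R0_zero (hc : d 1 (zamMap K a 1) = 0) {f : C(K, ℂ)} (hf : f ∈ R0 K) : d 1 f = 0 := by
  obtain ⟨p, q, hq, hrep⟩ := hf
  have hfRK : f ∈ RK K := R0_subset_RK ⟨p, q, hq, hrep⟩
  have hqa : q.eval a ≠ 0 := hq a ha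
  have key : pMap K q * f = pMap K p := by
    ext z
    have := hq z z.2
    simp only [ContinuousMap.mul_apply, pMap_apply, hrep z]
    field_simp
  have h := d1_leibniz' hd hm ha (pMap_mem_RK q) hfRK
  rw [key, d1_pMap_zero hd hm ha hc p, d1_pMap_zero hd hm ha hc q] at h
  simp only [pMap_apply] at h
  have hz : q.eval a * d 1 f = 0 := by linear_combination -h
  exact (mul_eq_zero.mp hz).resolve_left hqa

lemma c_ne_zero (hcont : Continuous fun f : RK K => d 1 f.1)
    (hnd : ∃ f ∈ RK K, d 1 f ≠ 0) : d 1 (zamMap K a 1) ≠ 0 := by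
  intro hc
  obtain ⟨f, hf, hne⟩ := hnd
  apply hne
  exact eqOn_closure_subtype (T := RK K) (S := R0 K) R0_subset_RK
    (F := fun x => d 1 x.1) (G := fun _ => 0) hcont continuous_const
    (fun x hx => d1_R0_zero hd hm ha hc hx) (x := ⟨f, hf⟩) hf

/-- pigeonhole: a `k`-th order term kills products of more than `k` vanishing functions. -/
lemma dk_prod_zero : ∀ k, k ≤ m → ∀ n (g : Fin n → C(K, ℂ)),
    (∀ j, g j ∈ Mx K a) → k < n → d k (∏ j, g j) = 0 := by
  intro k
  induction k using Nat.strong_induction_on with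
  | _ k IH =>
    intro hkm n g hg hkn
    obtain ⟨n', rfl⟩ : ∃ n', n = n' + 1 := ⟨n - 1, by omega⟩
    have hprod : (∏ j, g j) = g 0 * ∏ j : Fin n', g j.succ := Fin.prod_univ_succ g
    have hprodRK : (∏ j, g j) ∈ RK K := RK_prod fun j => (hg j).1
    have htailRK : (∏ j : Fin n', g j.succ) ∈ RK K := RK_prod fun j => (hg j.succ).1
    rcases Nat.eq_zero_or_pos k with rfl | hk
    · rw [hd.1 _ hprodRK ha, ContinuousMap.prod_apply]
      exact Finset.prod_eq_zero (Finset.mem_univ 0) ((hg 0).2 ha)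
    · rw [hprod, hd.2.2.2 k hk hkm _ (hg 0).1 _ htailRK]
      refine Finset.sum_eq_zero fun j hj => ?_
      rcases Nat.eq_zero_or_pos j with rfl | hjpos
      · rw [hd.1 _ (hg 0).1 ha, (hg 0).2 ha, zero_mul]
      · have hjk : j ≤ k := by simpa using Nat.lt_succ_iff.mp (Finset.mem_range.mp hj)
        have : d (k - j) (∏ j : Fin n', g j.succ) = 0 :=
          IH (k - j) (by omega) (by omega) n' _ (fun j => hg j.succ) (by omega)
        rw [this, mul_zero]

lemma dk_zam_pow : ∀ k, 1 ≤ k → k ≤ m → d k (zamMap K a k) = (d 1 (zamMap K a 1)) ^ k := by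
  intro k
  induction k with
  | zero => omega
  | succ k IH =>
    intro _ hkm
    rcases Nat.eq_zero_or_pos k with rfl | hk
    · simp
    · have hsplit : zamMap K a (k + 1) = zamMap K a 1 * zamMap K a k := by
        rw [zamMap_mul]
        congr 1
        omega
      rw [hsplit, hd.2.2.2 (k + 1) (by omega) hkm _ (zamMap_mem_RK 1) _ (zamMap_mem_RK k)]
      have hzero : ∀ j ∈ Finset.range (k + 2), j ≠ 1 →
          d j (zamMap K a 1) * d (k + 1 - j) (zamMap K a k) = 0 := by
        intro j hj hj1
        rcases Nat.eq_zero_or_pos j with rfl | hjpos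
        · rw [hd.1 _ (zamMap_mem_RK 1) ha]
          simp
        · have hj2 : 2 ≤ j := by omega
          have hjle : j ≤ k + 1 := by simpa using Nat.lt_succ_iff.mp (Finset.mem_range.mp hj)
          have : d (k + 1 - j) (zamMap K a k) = 0 := by
            rw [← prod_zamMap_one]
            exact dk_prod_zero hd hm ha (k + 1 - j) (by omega) k _
              (fun _ => zamMap_one_mem_Mx) (by omega)
          rw [this, mul_zero]
      rw [Finset.sum_eq_single_of_mem 1 (by simp) hzero]
      have hk1 : k + 1 - 1 = k := by omega
      rw [hk1, IH (by omega) (by omega)]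
      ring

end DerivLemmas
section ABLemmas
variable {K : Set ℂ} {a : ℂ} {m : ℕ} [CompactSpace K]

lemma dk_sum {d : ℕ → C(K, ℂ) → ℂ} (hd : IsPDOrder K a m d) {k : ℕ} (hk : k ≤ m) :
    ∀ (n : ℕ) (g : Fin n → C(K, ℂ)), (∀ i, g i ∈ RK K) →
      d k (∑ i, g i) = ∑ i, d k (g i) := by
  intro n
  induction n with
  | zero =>
    intro g _
    have h0 : d k (0 : C(K, ℂ)) = 0 := by
      have := hd.2.2.1 k hk 0 1 RK_one
      simpa using this
    simpa using h0
  | succ n IH =>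
    intro g hg
    rw [Fin.sum_univ_succ, hd.2.1 k hk _ (hg 0) _ (RK_sum fun i => hg i.succ),
      IH _ (fun i => hg i.succ), Fin.sum_univ_succ]

lemma A_implies_B (ha : a ∈ K) (hm : 1 ≤ m) (hA : HasNBPD K a m) :
    ∀ k, 1 ≤ k → k ≤ m →
      closure (idealPow (Mx K a) (k + 1)) ⊂ closure (idealPow (Mx K a) k) := by
  obtain ⟨d, hd, hcont, hnd⟩ := hA
  have hc := c_ne_zero hd hm ha (hcont 1 hm) hnd
  intro k hk1 hkm
  refine ⟨closure_mono (idealPow_succ_subset (fun f hf g hg => Mx_mul hf hg) hk1), fun hsub => ?_⟩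
  have hz : zamMap K a k ∈ closure (idealPow (Mx K a) (k + 1)) :=
    hsub (subset_closure (zamMap_mem_idealPow k))
  have hdkzero : d k (zamMap K a k) = 0 := by
    refine eqOn_closure_subtype (T := RK K) (S := idealPow (Mx K a) (k + 1)) idealPow_subset_RK
      (F := fun x => d k x.1) (G := fun _ => 0) (hcont k hkm) continuous_const
      (fun x hx => ?_) (x := ⟨zamMap K a k, zamMap_mem_RK k⟩) hz
    obtain ⟨n, g, hgS, hxval⟩ := hx
    have hds : d k x.1 = ∑ i, d k (∏ j, g i j) := by
      rw [hxval]
      exact dk_sum hd hkm n _ (fun i => RK_prod fun j => (hgS i j).1)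
    show d k x.1 = 0
    rw [hds]
    exact Finset.sum_eq_zero fun i _ =>
      dk_prod_zero hd hm ha k hkm (k + 1) (g i) (hgS i) (by omega)
  rw [dk_zam_pow hd hm ha k hk1 hkm] at hdkzero
  exact pow_ne_zero k hc hdkzero

lemma R0_prod {n : ℕ} {g : Fin n → C(K, ℂ)} (hg : ∀ j, g j ∈ R0 K) : (∏ j, g j) ∈ R0 K := by
  have : (∏ j, g j) ∈ R0sub K := prod_mem fun j _ => hg j
  exact this

lemma Mx_mem_closure_M0 (ha : a ∈ K) {f : C(K, ℂ)} (hf : f ∈ Mx K a) :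
    f ∈ closure {r : C(K, ℂ) | r ∈ R0 K ∧ r ⟨a, ha⟩ = 0} := by
  obtain ⟨hfRK, hfa⟩ := hf
  obtain ⟨u, hu, hul⟩ := mem_closure_iff_seq_limit.mp hfRK
  rw [mem_closure_iff_seq_limit]
  refine ⟨fun n => u n + (-(u n ⟨a, ha⟩)) • 1, fun n => ?_, ?_⟩
  · refine ⟨R0_add (hu n) (R0_smul _ R0_one), ?_⟩
    simp
  · have heval : Filter.Tendsto (fun n => u n ⟨a, ha⟩) Filter.atTop (nhds (f ⟨a, ha⟩)) :=
      ((continuous_eval_const (⟨a, ha⟩ : K)).tendsto f).comp hul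
    rw [hfa ha] at heval
    have hts : Filter.Tendsto (fun n => (-(u n ⟨a, ha⟩)) • (1 : C(K, ℂ))) Filter.atTop
        (nhds ((0 : ℂ) • 1)) := by
      have h2 := heval.neg
      rw [neg_zero] at h2
      exact h2.smul tendsto_const_nhds
    simpa using hul.add hts

lemma M0_factor (ha : a ∈ K) {r : C(K, ℂ)} (hr : r ∈ R0 K) (hra : r ⟨a, ha⟩ = 0) :
    ∃ s ∈ R0 K, r = zamMap K a 1 * s := by
  obtain ⟨p, q, hq, hrep⟩ := hr
  have hqa : q.eval a ≠ 0 := hq a ha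
  have hpa : p.eval a = 0 := by
    have h0 := hrep ⟨a, ha⟩
    rw [hra] at h0
    exact (div_eq_zero_iff.mp h0.symm).resolve_right hqa
  obtain ⟨p', hp'⟩ := (Polynomial.dvd_iff_isRoot.mpr hpa : (Polynomial.X - Polynomial.C a) ∣ p)
  refine ⟨⟨fun z => p'.eval (z : ℂ) / q.eval (z : ℂ), by
      apply Continuous.div
      · exact (p'.continuous_aeval).comp continuous_subtype_val
      · exact (q.continuous_aeval).comp continuous_subtype_val
      · exact fun z => hq z z.2⟩, ⟨p', q, hq, fun z => rfl⟩, ?_⟩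
  ext z
  simp only [ContinuousMap.mul_apply, zamMap_apply, pow_one, ContinuousMap.coe_mk, hrep z, hp',
    Polynomial.eval_mul, Polynomial.eval_sub, Polynomial.eval_X, Polynomial.eval_C]
  rw [mul_div_assoc]

lemma zam_succ_mul_mem_idealPow (ha : a ∈ K) {g : C(K, ℂ)} (hg : g ∈ R0 K) (k : ℕ) :
    zamMap K a (k + 1) * g ∈ idealPow (Mx K a) (k + 1) := by
  have hmem : ∀ j : Fin (k + 1),
      (Fin.cons (zamMap K a 1 * g) (fun _ : Fin k => zamMap K a 1) : Fin (k+1) → C(K, ℂ)) j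
        ∈ Mx K a := by
    intro j
    refine Fin.cases ?_ (fun j' => ?_) j
    · simp only [Fin.cons_zero]
      refine ⟨RK_mul (zamMap_mem_RK 1) (R0_subset_RK hg), fun h => by simp⟩
    · simp only [Fin.cons_succ]
      exact zamMap_one_mem_Mx
  have := prod_mem_idealPow hmem
  have hprod : (∏ j, (Fin.cons (zamMap K a 1 * g) (fun _ : Fin k => zamMap K a 1)
      : Fin (k+1) → C(K, ℂ)) j) = zamMap K a (k + 1) * g := by
    rw [Fin.prod_cons, prod_zamMap_one, mul_comm (zamMap K a 1 * g) (zamMap K a k),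
      ← mul_assoc, zamMap_mul]
  rwa [hprod] at this

lemma sum_closure_mem {E : Type*} [TopologicalSpace E] [FrechetUrysohnSpace E]
    [AddCommMonoid E] [ContinuousAdd E] {S : Set E}
    (hadd : ∀ x ∈ S, ∀ y ∈ S, x + y ∈ S) (h0 : (0 : E) ∈ S) :
    ∀ (n : ℕ) (g : Fin n → E), (∀ i, g i ∈ closure S) → (∑ i, g i) ∈ closure S := by
  intro n
  induction n with
  | zero => intro g _; simpa using subset_closure h0
  | succ n IH =>
    intro g hg
    rw [Fin.sum_univ_succ]
    exact closure_add_mem hadd (hg 0) (IH _ fun i => hg i.succ)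

lemma B_implies_C (ha : a ∈ K) (hm : 1 ≤ m)
    (hB : ∀ k, 1 ≤ k → k ≤ m →
      closure (idealPow (Mx K a) (k + 1)) ⊂ closure (idealPow (Mx K a) k)) :
    zamMap K a m ∉ closure {h : C(K, ℂ) | ∃ g ∈ R0 K, h = zamMap K a (m + 1) * g} := by
  intro hmem
  refine (hB m hm le_rfl).2 ?_
  have key : idealPow (Mx K a) m ⊆ closure (idealPow (Mx K a) (m + 1)) := by
    rintro f ⟨n, g, hgS, rfl⟩
    refine sum_closure_mem (fun x hx y hy => idealPow_add_mem hx hy) (idealPow_zero_mem _)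
      n _ (fun i => ?_)
    -- each product of m elements of Mx lies in closure (idealPow (m+1))
    suffices hstep : (∏ j, g i j) ∈ closure (closure (idealPow (Mx K a) (m + 1))) by
      rwa [closure_closure] at hstep
    refine closure_prod_mem (S := {r : C(K, ℂ) | r ∈ R0 K ∧ r ⟨a, ha⟩ = 0})
      (T := closure (idealPow (Mx K a) (m + 1)))
      (fun j => Mx_mem_closure_M0 ha (hgS i j)) (fun h hh => ?_)
    -- h j = zamMap 1 * s j
    have hfac : ∀ j, ∃ s, s ∈ R0 K ∧ h j = zamMap K a 1 * s := by
      intro j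
      obtain ⟨s, hs, heq⟩ := M0_factor ha (hh j).1 (hh j).2
      exact ⟨s, hs, heq⟩
    choose s hs hseq using hfac
    have hprod : (∏ j, h j) = zamMap K a m * ∏ j, s j := by
      calc (∏ j, h j) = ∏ j, (zamMap K a 1 * s j) := Finset.prod_congr rfl fun j _ => hseq j
        _ = (∏ _j : Fin m, zamMap K a 1) * ∏ j, s j := Finset.prod_mul_distrib
        _ = zamMap K a m * ∏ j, s j := by rw [prod_zamMap_one]
    rw [hprod]
    refine closure_mul_right_mem (S := {h : C(K, ℂ) | ∃ g ∈ R0 K, h = zamMap K a (m + 1) * g})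
      (fun y hy => ?_) hmem
    obtain ⟨g', hg', rfl⟩ := hy
    rw [mul_assoc]
    exact zam_succ_mul_mem_idealPow ha (R0_mul hg' (R0_prod hs)) m
  calc closure (idealPow (Mx K a) m) ⊆ closure (closure (idealPow (Mx K a) (m + 1))) :=
        closure_mono key
    _ = closure (idealPow (Mx K a) (m + 1)) := closure_closure

end ABLemmas
section Jet
open Polynomial

/-- power-series jet of the rational function `p/q` at `a`. -/
def jetS (a : ℂ) (p q : Polynomial ℂ) : PowerSeries ℂ :=
  ((Polynomial.taylor a p : Polynomial ℂ) : PowerSeries ℂ) *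
    (((Polynomial.taylor a q : Polynomial ℂ) : PowerSeries ℂ))⁻¹

lemma taylor_zam_pow (a : ℂ) (i : ℕ) :
    Polynomial.taylor a ((X - Polynomial.C a) ^ i) = X ^ i := by
  rw [Polynomial.taylor_apply, Polynomial.pow_comp, Polynomial.sub_comp, Polynomial.X_comp,
    Polynomial.C_comp]
  simp

lemma constCoeff_taylor_ne (a : ℂ) {q : Polynomial ℂ} (hqa : q.eval a ≠ 0) :
    PowerSeries.constantCoeff ((Polynomial.taylor a q : Polynomial ℂ) : PowerSeries ℂ) ≠ 0 := by
  rw [Polynomial.constantCoeff_coe, Polynomial.taylor_coeff_zero]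
  exact hqa

lemma jet_mul (a : ℂ) (p1 q1 p2 q2 : Polynomial ℂ) :
    jetS a (p1 * p2) (q1 * q2) = jetS a p1 q1 * jetS a p2 q2 := by
  unfold jetS
  rw [Polynomial.taylor_mul, Polynomial.taylor_mul, Polynomial.coe_mul, Polynomial.coe_mul,
    PowerSeries.mul_inv_rev]
  ring

/-- Taylor division with remainder for rational functions. -/
lemma taylor_division (m : ℕ) (a : ℂ) (p q : Polynomial ℂ) (hqa : q.eval a ≠ 0) :
    ∃ h : Polynomial ℂ,
      p = (∑ i ∈ Finset.range (m + 1),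
            Polynomial.C (PowerSeries.coeff i (jetS a p q)) * (X - Polynomial.C a) ^ i) * q
          + (X - Polynomial.C a) ^ (m + 1) * h := by
  set J : ℕ → ℂ := fun i => PowerSeries.coeff i (jetS a p q) with hJ
  set P : Polynomial ℂ := Polynomial.taylor a p with hP
  set Q : Polynomial ℂ := Polynomial.taylor a q with hQ
  set T : Polynomial ℂ := ∑ i ∈ Finset.range (m + 1), Polynomial.C (J i) * X ^ i with hT
  have hQ0 : PowerSeries.constantCoeff (Q : PowerSeries ℂ) ≠ 0 := constCoeff_taylor_ne a hqa
  have hTcoeff : ∀ j ≤ m, T.coeff j = J j := by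
    intro j hj
    rw [hT, Polynomial.finset_sum_coeff]
    rw [Finset.sum_eq_single j]
    · simp
    · intro i _ hij
      simp [Polynomial.coeff_C_mul, Polynomial.coeff_X_pow, Ne.symm hij]
    · intro hjmem
      exact absurd (Finset.mem_range.mpr (by omega)) (fun h => hjmem h)
  have hPdecomp : (P : PowerSeries ℂ) = jetS a p q * (Q : PowerSeries ℂ) := by
    show ((Polynomial.taylor a p : Polynomial ℂ) : PowerSeries ℂ)
        = jetS a p q * ((Polynomial.taylor a q : Polynomial ℂ) : PowerSeries ℂ)
    unfold jetS
    rw [mul_assoc, PowerSeries.inv_mul_cancel _ hQ0, mul_one]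
  have hdvd : (X : Polynomial ℂ) ^ (m + 1) ∣ P - T * Q := by
    rw [Polynomial.X_pow_dvd_iff]
    intro dd hdd
    have hddm : dd ≤ m := by omega
    rw [Polynomial.coeff_sub, Polynomial.coeff_mul, sub_eq_zero]
    have hcoeffP : P.coeff dd = PowerSeries.coeff dd (P : PowerSeries ℂ) := by
      rw [Polynomial.coeff_coe]
    rw [hcoeffP, hPdecomp, PowerSeries.coeff_mul]
    refine Finset.sum_congr rfl fun uv huv => ?_
    have huv' := Finset.HasAntidiagonal.mem_antidiagonal.mp huv
    have hu : uv.1 ≤ m := by omega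
    rw [Polynomial.coeff_coe, hTcoeff uv.1 hu]
  obtain ⟨u, hu⟩ := hdvd
  refine ⟨Polynomial.taylor (-a) u, ?_⟩
  have happly : Polynomial.taylor (-a) P = p := by
    rw [hP, Polynomial.taylor_taylor]; simp
  have hTt : Polynomial.taylor (-a) T
      = ∑ i ∈ Finset.range (m + 1), Polynomial.C (J i) * (X - Polynomial.C a) ^ i := by
    rw [hT, map_sum]
    refine Finset.sum_congr rfl fun i _ => ?_
    rw [Polynomial.taylor_apply, Polynomial.mul_comp, Polynomial.C_comp, Polynomial.pow_comp,
      Polynomial.X_comp]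
    congr 1
    congr 1
    simp [map_neg, Polynomial.C_neg]
    ring
  have hQt : Polynomial.taylor (-a) Q = q := by
    rw [hQ, Polynomial.taylor_taylor]; simp
  have hXt : Polynomial.taylor (-a) ((X : Polynomial ℂ) ^ (m + 1))
      = (X - Polynomial.C a) ^ (m + 1) := by
    rw [Polynomial.taylor_apply, Polynomial.pow_comp, Polynomial.X_comp]
    congr 1
    simp [Polynomial.C_neg]
    ring
  have := congrArg (fun x => Polynomial.taylor (-a) x) hu
  change Polynomial.taylor (-a) (P - T * Q)
    = Polynomial.taylor (-a) ((X : Polynomial ℂ) ^ (m + 1) * u) at this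
  rw [map_sub, Polynomial.taylor_mul, Polynomial.taylor_mul, happly, hTt, hQt, hXt] at this
  -- this : p - T'(..) * q = (X - C a)^(m+1) * taylor (-a) u
  linear_combination this
end Jet
section Decomp
open Polynomial
variable {K : Set ℂ} {a : ℂ}

/-- Decomposition of a rational function as its Taylor polynomial plus remainder. -/
lemma rep_decomp (ha : a ∈ K) (m : ℕ) {f : C(K, ℂ)} (p q : Polynomial ℂ)
    (hq : ∀ z ∈ K, q.eval z ≠ 0) (hrep : ∀ z : K, f z = p.eval (z : ℂ) / q.eval (z : ℂ)) :
    ∃ r ∈ R0 K, f = (∑ i ∈ Finset.range (m + 1),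
        (PowerSeries.coeff i (jetS a p q)) • zamMap K a i) + zamMap K a (m + 1) * r := by
  obtain ⟨h, hdecomp⟩ := taylor_division m a p q (hq a ha)
  have hevalp : ∀ w : ℂ, p.eval w =
      (∑ i ∈ Finset.range (m + 1), (PowerSeries.coeff i (jetS a p q)) * (w - a) ^ i) * q.eval w
        + (w - a) ^ (m + 1) * h.eval w := by
    intro w
    conv_lhs => rw [hdecomp]
    simp [Polynomial.eval_finset_sum]
  refine ⟨⟨fun z => h.eval (z : ℂ) / q.eval (z : ℂ), by
      apply Continuous.div
      · exact (h.continuous_aeval).comp continuous_subtype_val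
      · exact (q.continuous_aeval).comp continuous_subtype_val
      · exact fun z => hq z z.2⟩, ⟨h, q, hq, fun z => rfl⟩, ?_⟩
  ext z
  have hqz := hq z z.2
  simp only [ContinuousMap.add_apply, ContinuousMap.sum_apply, ContinuousMap.smul_apply,
    zamMap_apply, ContinuousMap.mul_apply, ContinuousMap.coe_mk, hrep z, smul_eq_mul]
  rw [hevalp (z : ℂ)]
  field_simp
end Decomp
section HahnBanach
variable {K : Set ℂ} {a : ℂ} {m : ℕ} [CompactSpace K]

/-- the set `(z-a)^{m+1} R₀(K)` as a `ℂ`-submodule of `C(K,ℂ)`. -/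
def Bsub (K : Set ℂ) (a : ℂ) (m : ℕ) : Submodule ℂ C(K, ℂ) where
  carrier := {h : C(K, ℂ) | ∃ g ∈ R0 K, h = zamMap K a (m + 1) * g}
  add_mem' := by
    rintro x y ⟨g1, hg1, rfl⟩ ⟨g2, hg2, rfl⟩
    exact ⟨g1 + g2, R0_add hg1 hg2, (mul_add _ _ _).symm⟩
  zero_mem' := ⟨0, R0_zero, (mul_zero _).symm⟩
  smul_mem' := by
    rintro c x ⟨g, hg, rfl⟩
    exact ⟨c • g, R0_smul c hg, (mul_smul_comm c _ g).symm⟩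

lemma exists_functional
    (hC : zamMap K a m ∉ closure {h : C(K, ℂ) | ∃ g ∈ R0 K, h = zamMap K a (m + 1) * g}) :
    ∃ L : C(K, ℂ) →L[ℂ] ℂ, (∀ g ∈ R0 K, L (zamMap K a (m + 1) * g) = 0) ∧
      L (zamMap K a m) ≠ 0 := by
  set s : Set C(K, ℂ) := closure {h : C(K, ℂ) | ∃ g ∈ R0 K, h = zamMap K a (m + 1) * g} with hs
  have hconv : Convex ℝ s :=
    (((Bsub K a m).restrictScalars ℝ).convex).closure
  obtain ⟨fr, u, hfu, hux⟩ := geometric_hahn_banach_closed_point hconv isClosed_closure hC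
  -- fr vanishes on s
  have hsmul : ∀ (c : ℂ) (y : C(K, ℂ)), y ∈ s → c • y ∈ s := by
    intro c y hy
    have : c • y ∈ closure ((Bsub K a m : Set C(K, ℂ))) :=
      map_mem_closure (continuous_const_smul c) hy
        (fun w hw => (Bsub K a m).smul_mem c hw)
    exact this
  have hfr0 : ∀ y ∈ s, fr y = 0 := by
    intro y hy
    by_contra hne
    have hall : ∀ t : ℝ, t * fr y < u := by
      intro t
      have : (t : ℝ) • y ∈ s := by
        have : ((t : ℂ) • y) ∈ s := hsmul t y hy
        rwa [show ((t : ℂ) • y) = (t : ℝ) • y by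
          ext z; simp [Complex.ofReal_mul]] at this
      simpa using hfu _ this
    have habs := hall ((|u| + 1) / fr y)
    rw [div_mul_cancel₀ _ hne] at habs
    have := abs_nonneg u
    have := le_abs_self u
    linarith
  refine ⟨StrongDual.extendRCLike fr, fun g hg => ?_, ?_⟩
  · have hyB : zamMap K a (m + 1) * g ∈ s := subset_closure ⟨g, hg, rfl⟩
    have hiB : ((RCLike.I : ℂ)) • (zamMap K a (m + 1) * g) ∈ s := hsmul _ _ hyB
    rw [ContinuousLinearMap.extendTo𝕜'_apply, hfr0 _ hyB, hfr0 _ hiB]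
    simp
  · intro h0
    have hre := fr.toLinearMap.extendTo𝕜'_apply_re (𝕜 := ℂ) (zamMap K a m)
    rw [show (Module.Dual.extendRCLike fr.toLinearMap (zamMap K a m) : ℂ)
        = StrongDual.extendRCLike fr (zamMap K a m) from rfl, h0] at hre
    simp only [map_zero, ContinuousLinearMap.coe_coe] at hre
    have h0s : (0 : C(K, ℂ)) ∈ s := subset_closure ⟨0, R0_zero, (mul_zero _).symm⟩
    have := hfu 0 h0s
    simp only [map_zero] at this
    linarith
end HahnBanach
section DConstr
open Polynomial
variable {K : Set ℂ} {a : ℂ} {m : ℕ} [CompactSpace K]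

/-- the candidate point derivation built from the functional `L`. -/
def Dfun (K : Set ℂ) (a : ℂ) (m : ℕ) [CompactSpace K] (L : C(K, ℂ) →L[ℂ] ℂ) :
    ℕ → C(K, ℂ) → ℂ := fun k f =>
  ∑ i ∈ Finset.range (k + 1),
    (PowerSeries.coeff (k - i) ((PowerSeries.mk fun j => L (zamMap K a (m - j)))⁻¹))
      * L (zamMap K a (m - i) * f)

variable {L : C(K, ℂ) →L[ℂ] ℂ}

lemma D_continuous (k : ℕ) : Continuous (Dfun K a m L k) := by
  apply continuous_finset_sum
  intro i _
  exact continuous_const.mul (L.continuous.comp (continuous_mul_left _))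

lemma D_add (k : ℕ) (f g : C(K, ℂ)) :
    Dfun K a m L k (f + g) = Dfun K a m L k f + Dfun K a m L k g := by
  unfold Dfun
  rw [← Finset.sum_add_distrib]
  refine Finset.sum_congr rfl fun i _ => ?_
  rw [mul_add, map_add]
  ring

lemma D_smul (k : ℕ) (c : ℂ) (f : C(K, ℂ)) :
    Dfun K a m L k (c • f) = c * Dfun K a m L k f := by
  unfold Dfun
  rw [Finset.mul_sum]
  refine Finset.sum_congr rfl fun i _ => ?_
  rw [mul_smul_comm, map_smul, smul_eq_mul]
  ring

variable (hL0 : ∀ g ∈ R0 K, L (zamMap K a (m + 1) * g) = 0)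

include hL0 in
lemma L_zam_high {n : ℕ} (hn : m < n) : L (zamMap K a n) = 0 := by
  have hzz : zamMap K a n = zamMap K a (m + 1) * zamMap K a (n - (m + 1)) := by
    rw [zamMap_mul]; congr 1; omega
  rw [hzz]
  exact hL0 _ (zamMap_mem_R0 _)

include hL0 in
lemma L_mul_rep (ha : a ∈ K) {f : C(K, ℂ)} (p q : Polynomial ℂ)
    (hq : ∀ z ∈ K, q.eval z ≠ 0) (hrep : ∀ z : K, f z = p.eval (z : ℂ) / q.eval (z : ℂ))
    {i : ℕ} (him : i ≤ m) :
    L (zamMap K a (m - i) * f) = ∑ t ∈ Finset.range (i + 1),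
      PowerSeries.coeff t (jetS a p q) * L (zamMap K a (m - (i - t))) := by
  obtain ⟨r, hr, hfeq⟩ := rep_decomp ha m p q hq hrep
  rw [hfeq, mul_add, Finset.mul_sum, map_add, map_sum]
  have hlast : L (zamMap K a (m - i) * (zamMap K a (m + 1) * r)) = 0 := by
    rw [show zamMap K a (m - i) * (zamMap K a (m + 1) * r)
        = zamMap K a (m + 1) * (zamMap K a (m - i) * r) by ring]
    exact hL0 _ (R0_mul (zamMap_mem_R0 _) hr)
  rw [hlast, add_zero]
  have hsub : Finset.range (i + 1) ⊆ Finset.range (m + 1) := by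
    intro t ht
    simp only [Finset.mem_range] at *
    omega
  rw [← Finset.sum_subset hsub ?vanish]
  case vanish =>
    intro t htm hti
    simp only [Finset.mem_range] at htm hti
    have ht : i < t := by omega
    rw [mul_smul_comm, map_smul, zamMap_mul, smul_eq_mul]
    rw [L_zam_high hL0 (by omega), mul_zero]
  refine Finset.sum_congr rfl fun t ht => ?_
  simp only [Finset.mem_range] at ht
  rw [mul_smul_comm, map_smul, zamMap_mul, smul_eq_mul]
  congr 3
  omega

variable (hLm : L (zamMap K a m) ≠ 0)

include hL0 hLm in
lemma D_eq_jet (ha : a ∈ K) {k : ℕ} (hk : k ≤ m) {f : C(K, ℂ)} (p q : Polynomial ℂ)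
    (hq : ∀ z ∈ K, q.eval z ≠ 0) (hrep : ∀ z : K, f z = p.eval (z : ℂ) / q.eval (z : ℂ)) :
    Dfun K a m L k f = PowerSeries.coeff k (jetS a p q) := by
  set lam : PowerSeries ℂ := PowerSeries.mk fun j => L (zamMap K a (m - j)) with hlam
  have hlam0 : PowerSeries.constantCoeff lam ≠ 0 := by
    have : PowerSeries.constantCoeff lam = L (zamMap K a m) := by
      rw [hlam, ← PowerSeries.coeff_zero_eq_constantCoeff_apply, PowerSeries.coeff_mk]
      norm_num
    rw [this]
    exact hLm
  have hTi : ∀ i, i ≤ m → L (zamMap K a (m - i) * f)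
      = PowerSeries.coeff i (jetS a p q * lam) := by
    intro i him
    rw [L_mul_rep hL0 ha p q hq hrep him, PowerSeries.coeff_mul,
      Finset.Nat.sum_antidiagonal_eq_sum_range_succ_mk]
    refine Finset.sum_congr rfl fun t ht => ?_
    rw [hlam, PowerSeries.coeff_mk]
  unfold Dfun
  rw [Finset.sum_congr rfl (fun i hi => by
    rw [hTi i (by
      have := Finset.mem_range.mp hi
      omega)])]
  have hswap : ∑ i ∈ Finset.range (k + 1),
      PowerSeries.coeff (k - i) lam⁻¹ * PowerSeries.coeff i (jetS a p q * lam)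
      = PowerSeries.coeff k (lam⁻¹ * (jetS a p q * lam)) := by
    rw [PowerSeries.coeff_mul, Finset.Nat.sum_antidiagonal_eq_sum_range_succ_mk,
      ← Finset.sum_range_reflect]
    refine Finset.sum_congr rfl fun u hu => ?_
    have hu' : u ≤ k := by
      have := Finset.mem_range.mp hu
      omega
    have e1 : k + 1 - 1 - u = k - u := by omega
    have e2 : k - (k - u) = u := by omega
    rw [e1, e2]
  rw [hswap, show lam⁻¹ * (jetS a p q * lam) = (lam⁻¹ * lam) * jetS a p q by ring,
    PowerSeries.inv_mul_cancel lam hlam0, one_mul]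

include hL0 hLm in
lemma D_leibniz_R0 (ha : a ∈ K) {k : ℕ} (hk : k ≤ m) {f g : C(K, ℂ)}
    (hf : f ∈ R0 K) (hg : g ∈ R0 K) :
    Dfun K a m L k (f * g)
      = ∑ j ∈ Finset.range (k + 1), Dfun K a m L j f * Dfun K a m L (k - j) g := by
  obtain ⟨p1, q1, hq1, h1⟩ := hf
  obtain ⟨p2, q2, hq2, h2⟩ := hg
  have hqmul : ∀ z ∈ K, (q1 * q2).eval z ≠ 0 := fun z hz => by simp [hq1 z hz, hq2 z hz]
  have hrepmul : ∀ z : K, (f * g) z = (p1 * p2).eval (z : ℂ) / (q1 * q2).eval (z : ℂ) := by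
    intro z
    simp only [ContinuousMap.mul_apply, h1 z, h2 z, Polynomial.eval_mul]
    ring
  rw [D_eq_jet hL0 hLm ha hk (p1 * p2) (q1 * q2) hqmul hrepmul, jet_mul,
    PowerSeries.coeff_mul, Finset.Nat.sum_antidiagonal_eq_sum_range_succ_mk]
  refine Finset.sum_congr rfl fun j hj => ?_
  have hjk : j ≤ k := by
    have := Finset.mem_range.mp hj
    omega
  rw [D_eq_jet hL0 hLm ha (by omega : j ≤ m) p1 q1 hq1 h1,
    D_eq_jet hL0 hLm ha (by omega : k - j ≤ m) p2 q2 hq2 h2]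

include hL0 hLm in
lemma D_zero_R0 (ha : a ∈ K) {f : C(K, ℂ)} (hf : f ∈ R0 K) :
    Dfun K a m L 0 f = f ⟨a, ha⟩ := by
  obtain ⟨p, q, hq, hrep⟩ := hf
  rw [D_eq_jet hL0 hLm ha (Nat.zero_le m) p q hq hrep]
  have hc : PowerSeries.coeff 0 (jetS a p q) = p.eval a * (q.eval a)⁻¹ := by
    rw [PowerSeries.coeff_zero_eq_constantCoeff_apply]
    unfold jetS
    rw [map_mul, PowerSeries.constantCoeff_inv, Polynomial.constantCoeff_coe,
      Polynomial.constantCoeff_coe, Polynomial.taylor_coeff_zero, Polynomial.taylor_coeff_zero]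
  rw [hc, hrep ⟨a, ha⟩, div_eq_mul_inv]

include hL0 hLm in
lemma D_one_zam (ha : a ∈ K) (hm : 1 ≤ m) : Dfun K a m L 1 (zamMap K a 1) = 1 := by
  have hrep : ∀ z : K, zamMap K a 1 z
      = (X - Polynomial.C a).eval (z : ℂ) / (1 : Polynomial ℂ).eval (z : ℂ) := by
    intro z; simp
  rw [D_eq_jet hL0 hLm ha hm (X - Polynomial.C a) 1 (fun _ _ => by simp) hrep]
  unfold jetS
  have ht1 : Polynomial.taylor a (X - Polynomial.C a) = X := by
    rw [Polynomial.taylor_apply]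
    simp [Polynomial.sub_comp]
  have ht2 : Polynomial.taylor a (1 : Polynomial ℂ) = 1 := by simp
  rw [ht1, ht2, Polynomial.coe_one, inv_one, mul_one, Polynomial.coeff_coe,
    Polynomial.coeff_X_one]

end DConstr
section Final
variable {K : Set ℂ} {a : ℂ} {m : ℕ} [CompactSpace K]

lemma C_implies_A (ha : a ∈ K) (hm : 1 ≤ m)
    (hC : zamMap K a m ∉ closure {h : C(K, ℂ) | ∃ g ∈ R0 K, h = zamMap K a (m + 1) * g}) :
    HasNBPD K a m := by
  obtain ⟨L, hL0, hLm⟩ := exists_functional hC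
  refine ⟨Dfun K a m L, ⟨?d0, ?dadd, ?dsmul, ?dleib⟩, ?dcont, ?dnd⟩
  case d0 =>
    intro f hf h
    exact eqOn_closure_subtype (T := RK K) (S := R0 K) R0_subset_RK
      (F := fun x => Dfun K a m L 0 x.1) (G := fun x => x.1 ⟨a, h⟩)
      ((D_continuous 0).comp continuous_subtype_val)
      ((continuous_eval_const _).comp continuous_subtype_val)
      (fun x hx => D_zero_R0 hL0 hLm h hx) (x := ⟨f, hf⟩) hf
  case dadd => intro k _ f _ g _; exact D_add k f g
  case dsmul => intro k _ c f _; exact D_smul k c f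
  case dleib =>
    intro k h1k hkm f hf g hg
    have hFcont : Continuous (fun p : {x // x ∈ RK K} × {x // x ∈ RK K} =>
        Dfun K a m L k (p.1.1 * p.2.1)) :=
      (D_continuous k).comp ((continuous_subtype_val.comp continuous_fst).mul
        (continuous_subtype_val.comp continuous_snd))
    have hGcont : Continuous (fun p : {x // x ∈ RK K} × {x // x ∈ RK K} =>
        ∑ j ∈ Finset.range (k + 1),
          Dfun K a m L j p.1.1 * Dfun K a m L (k - j) p.2.1) := by
      apply continuous_finset_sum
      intro j _
      exact ((D_continuous j).comp (continuous_subtype_val.comp continuous_fst)).mul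
        ((D_continuous (k - j)).comp (continuous_subtype_val.comp continuous_snd))
    exact eqOn_closure_subtype2 (T := RK K) (S := R0 K) R0_subset_RK
      hFcont hGcont (fun x y hx hy => D_leibniz_R0 hL0 hLm ha hkm hx hy)
      (x := ⟨f, hf⟩) (y := ⟨g, hg⟩) hf hg
  case dcont => intro k _; exact (D_continuous k).comp continuous_subtype_val
  case dnd =>
    exact ⟨zamMap K a 1, zamMap_mem_RK 1, by
      rw [D_one_zam hL0 hLm ha hm]; exact one_ne_zero⟩

end Final
/-- Corollary 2.7: equivalence of nondegenerate bounded point derivations of order `m`,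
the strictly decreasing chain of closed powers of `M_a`, and
`(z−a)^m ∉ cl((z−a)^{m+1} R₀(K))`. -/
theorem derivations_vs_ideals_RK (K : Set ℂ) (hne : K.Nonempty) (hK : IsCompact K)
    (a : ℂ) (ha : a ∈ K) (m : ℕ) (hm : 1 ≤ m) :
    (HasNBPD K a m ↔
      ∀ k : ℕ, 1 ≤ k → k ≤ m →
        closure (idealPow (Mx K a) (k + 1)) ⊂ closure (idealPow (Mx K a) k)) ∧
    (HasNBPD K a m ↔
      zamMap K a m ∉ closure {h : C(K, ℂ) | ∃ g ∈ R0 K, h = zamMap K a (m + 1) * g}) := by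
  haveI : CompactSpace K := isCompact_iff_compactSpace.mp hK
  constructor
  · constructor
    · intro hA
      exact fun k hk1 hkm => A_implies_B ha hm hA k hk1 hkm
    · intro hB
      exact C_implies_A ha hm (B_implies_C ha hm hB)
  · constructor
    · intro hA
      exact B_implies_C ha hm (fun k h1 h2 => A_implies_B ha hm hA k h1 h2)
    · intro hC
      exact C_implies_A ha hm hC

end
end
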